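/- arXiv:0807.1516 — 6 statements merged into one kernel-verified Lean document; each statement's English description precedes it below -/
import Mathlib

section
/- Let E and F be real Banach spaces, M ⊆ E open, k ≥ 1, h : M → ℝ a C^k function whose derivative dh(m) is nonzero at every m with h(m) = 0, and f : M → F a C^k map with f(m) = 0 whenever h(m) = 0. Then: (i) for every m ∈ M with h(m) = 0 there is a unique vector e(m) ∈ F such that Df(m)·u = (dh(m)·u)·e(m) for all u ∈ E; and (ii) the map f̂ : M → F defined by f̂(m) := f(m)/h(m) when h(m) ≠ 0 and f̂(m) := e(m) when h(m) = 0 is of class C^{k−1} (where C⁰ means continuous). -/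
set_option maxHeartbeats 1000000
set_option synthInstance.maxHeartbeats 400000

open Set MeasureTheory Filter Metric Topology

universe u v

theorem paramInt {E : Type u} [NormedAddCommGroup E] [NormedSpace ℝ E]
    (n : ℕ) : ∀ {F : Type (max u v)} [NormedAddCommGroup F] [NormedSpace ℝ F] [CompleteSpace F]
    {Φ : E × ℝ → F} {U : Set E} {T : Set ℝ}, IsOpen U → IsOpen T → Icc (0:ℝ) 1 ⊆ T →
    ContDiffOn ℝ n Φ (U ×ˢ T) →
    ContDiffOn ℝ n (fun x => ∫ t in (0:ℝ)..1, Φ (x, t)) U := by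
  induction n with
  | zero =>
    intro F _ _ _ Φ U T hU hT hI hΦ
    simp only [Nat.cast_zero, contDiffOn_zero] at hΦ ⊢
    set c : ℝ → ℝ := fun t => max 0 (min t 1) with hc_def
    have hc : Continuous c := continuous_const.max (continuous_id.min continuous_const)
    have hcmem : ∀ t, c t ∈ Icc (0:ℝ) 1 :=
      fun t => ⟨le_max_left _ _, max_le zero_le_one (min_le_right _ _)⟩
    rw [continuousOn_iff_continuous_restrict]
    have heq : (U.domRestrict fun x => ∫ t in (0:ℝ)..1, Φ (x, t))
        = fun x : U => ∫ t in (0:ℝ)..1, Φ (x.1, c t) := by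
      funext x
      refine intervalIntegral.integral_congr fun t ht => ?_
      rw [uIcc_of_le zero_le_one] at ht
      have : c t = t := by
        rw [hc_def]; simp only; rw [min_eq_left ht.2, max_eq_right ht.1]
      rw [this]
    rw [heq]
    refine intervalIntegral.continuous_parametric_intervalIntegral_of_continuous' (μ := volume)
      (f := fun (x : U) t => Φ (x.1, c t)) ?_ 0 1
    have : (Function.uncurry fun (x : U) t => Φ (x.1, c t))
        = Φ ∘ (fun p : U × ℝ => (p.1.1, c p.2)) := rfl
    rw [this]
    exact hΦ.comp_continuous ((continuous_subtype_val.comp continuous_fst).prodMk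
      (hc.comp continuous_snd)) (fun p => ⟨p.1.2, hI (hcmem p.2)⟩)
  | succ n ih =>
    intro F _ _ _ Φ U T hU hT hI hΦ
    have hcast : ((n + 1 : ℕ) : WithTop ℕ∞) = (n : WithTop ℕ∞) + 1 := by push_cast; ring
    rw [hcast, contDiffOn_succ_iff_fderiv_of_isOpen hU]
    set L : ((E × ℝ) →L[ℝ] F) →L[ℝ] (E →L[ℝ] F) :=
      (ContinuousLinearMap.compL ℝ E (E × ℝ) F).flip (ContinuousLinearMap.inl ℝ E ℝ) with hL_def
    have hLapp : ∀ (A : (E × ℝ) →L[ℝ] F), L A = A.comp (ContinuousLinearMap.inl ℝ E ℝ) := by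
      intro A; rfl
    have h1n : (1 : WithTop ℕ∞) ≤ ((n+1 : ℕ) : WithTop ℕ∞) := by
      exact_mod_cast Nat.succ_le_succ (Nat.zero_le n)
    have hDc : ContinuousOn (fderiv ℝ Φ) (U ×ˢ T) :=
      hΦ.continuousOn_fderiv_of_isOpen (hU.prod hT) h1n
    -- key derivative fact
    have key : ∀ x₀ ∈ U, HasFDerivAt (fun x => ∫ t in (0:ℝ)..1, Φ (x, t))
        (∫ t in (0:ℝ)..1, L (fderiv ℝ Φ (x₀, t))) x₀ := by
      intro x₀ hx₀
      obtain ⟨C, hC⟩ : ∃ C, ∀ p ∈ ({x₀} ×ˢ Icc (0:ℝ) 1), ‖fderiv ℝ Φ p‖ ≤ C :=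
        (isCompact_singleton.prod isCompact_Icc).exists_bound_of_continuousOn
          (hDc.mono (fun p hp => ⟨by rw [mem_singleton_iff.1 hp.1]; exact hx₀, hI hp.2⟩))
      set S : Set (E × ℝ) := {p | p ∈ U ×ˢ T ∧ ‖fderiv ℝ Φ p‖ < C + 1} with hS_def
      have hSopen : IsOpen S := by
        rw [isOpen_iff_mem_nhds]
        rintro p ⟨hp1, hp2⟩
        have h1 : U ×ˢ T ∈ 𝓝 p := (hU.prod hT).mem_nhds hp1
        have h2 : ∀ᶠ q in 𝓝 p, ‖fderiv ℝ Φ q‖ < C + 1 :=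
          Filter.Tendsto.eventually_lt_const hp2 ((hDc.continuousAt h1).norm)
        filter_upwards [h1, h2] with q hq1 hq2 using ⟨hq1, hq2⟩
      have hKS : {x₀} ×ˢ Icc (0:ℝ) 1 ⊆ S := fun p hp =>
        ⟨⟨by rw [mem_singleton_iff.1 hp.1]; exact hx₀, hI hp.2⟩,
          lt_of_le_of_lt (hC p hp) (lt_add_one C)⟩
      obtain ⟨u, v, hu, hv, hxu, hIv, huv⟩ :=
        generalized_tube_lemma isCompact_singleton isCompact_Icc hSopen hKS
      obtain ⟨ε, hε, hball⟩ := Metric.isOpen_iff.1 (hu.inter hU) x₀ ⟨hxu rfl, hx₀⟩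
      have memS : ∀ x ∈ ball x₀ ε, ∀ t ∈ Icc (0:ℝ) 1, (x, t) ∈ S := by
        intro x hx t ht
        exact huv ⟨(hball hx).1, hIv ht⟩
      have hIoc : uIoc (0:ℝ) 1 ⊆ Icc (0:ℝ) 1 := by
        rw [uIoc_of_le zero_le_one]; exact Ioc_subset_Icc_self
      have hcont_slice : ∀ x ∈ ball x₀ ε, ContinuousOn (fun t => Φ (x, t)) T := by
        intro x hx
        exact hΦ.continuousOn.comp (Continuous.continuousOn (by fun_prop))
          (fun t ht => ⟨(hball hx).2, ht⟩)
      refine intervalIntegral.hasFDerivAt_integral_of_dominated_of_fderiv_le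
        (𝕜 := ℝ) (μ := volume) (F := fun x t => Φ (x, t))
        (F' := fun x t => L (fderiv ℝ Φ (x, t)))
        (bound := fun _ => C + 1) (s := ball x₀ ε) (Metric.ball_mem_nhds x₀ hε) ?_ ?_ ?_ ?_ ?_ ?_
      · filter_upwards [Metric.ball_mem_nhds x₀ hε] with x hx
        exact ((hcont_slice x hx).mono (fun t ht => hI (hIoc ht))).aestronglyMeasurable
          measurableSet_uIoc
      · exact ((hcont_slice x₀ (Metric.mem_ball_self hε)).mono
          (by rw [uIcc_of_le zero_le_one]; exact hI)).intervalIntegrable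
      · refine ((L.continuous.comp_continuousOn (hDc.comp
          (Continuous.continuousOn (by fun_prop)) (fun t ht => ⟨hx₀, ht⟩))).mono ?_
            ).aestronglyMeasurable measurableSet_uIoc
        exact fun t ht => hI (hIoc ht)
      · refine Eventually.of_forall fun t ht x hx => ?_
        show ‖L (fderiv ℝ Φ (x, t))‖ ≤ C + 1
        rw [hLapp]
        have hC0 : (0:ℝ) ≤ C := le_trans (norm_nonneg _)
          (hC (x₀, 0) ⟨rfl, by constructor <;> norm_num⟩)
        refine ContinuousLinearMap.opNorm_le_bound _ (by linarith) fun w => ?_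
        rw [ContinuousLinearMap.comp_apply, ContinuousLinearMap.inl_apply]
        calc ‖fderiv ℝ Φ (x, t) (w, (0:ℝ))‖
            ≤ ‖fderiv ℝ Φ (x, t)‖ * ‖(w, (0:ℝ))‖ := ContinuousLinearMap.le_opNorm _ _
          _ ≤ (C + 1) * ‖w‖ := by
              have hn : ‖(w, (0:ℝ))‖ = ‖w‖ := by
                rw [Prod.norm_def]; simp [norm_zero]
              rw [hn]
              exact mul_le_mul_of_nonneg_right
                (le_of_lt (memS x hx t (hIoc ht)).2) (norm_nonneg w)
      · exact intervalIntegrable_const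
      · refine Eventually.of_forall fun t ht x hx => ?_
        show HasFDerivAt (fun x => Φ (x, t)) (L (fderiv ℝ Φ (x, t))) x
        have hxt : (x, t) ∈ U ×ˢ T := ⟨(hball hx).2, hI (hIoc ht)⟩
        have hΦd : HasFDerivAt Φ (fderiv ℝ Φ (x, t)) (x, t) :=
          ((hΦ.contDiffAt ((hU.prod hT).mem_nhds hxt)).differentiableAt (by exact_mod_cast (show n + 1 ≠ 0 by omega))).hasFDerivAt
        have hincl : HasFDerivAt (fun y : E => (y, t)) (ContinuousLinearMap.inl ℝ E ℝ) x :=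
          (hasFDerivAt_id x).prodMk (hasFDerivAt_const t x)
        rw [hLapp]
        exact hΦd.comp x hincl
    refine ⟨fun x hx => (key x hx).differentiableAt.differentiableWithinAt,
      fun h => absurd h (by simp), ?_⟩
    have hΨ : ContDiffOn ℝ n (fun p : E × ℝ => L (fderiv ℝ Φ p)) (U ×ˢ T) :=
      L.contDiff.comp_contDiffOn (hΦ.fderiv_of_isOpen (hU.prod hT) (le_of_eq hcast.symm))
    have hInt : ContDiffOn ℝ n (fun x => ∫ t in (0:ℝ)..1, L (fderiv ℝ Φ (x, t))) U :=
      @ih (E →L[ℝ] F) _ _ _ (fun p => L (fderiv ℝ Φ p)) U T hU hT hI hΨ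
    exact hInt.congr fun x hx => (key x hx).fderiv


theorem paramInt' {E : Type u} [NormedAddCommGroup E] [NormedSpace ℝ E]
    (n : ℕ) {F : Type v} [NormedAddCommGroup F] [NormedSpace ℝ F] [CompleteSpace F]
    {Φ : E × ℝ → F} {U : Set E} {T : Set ℝ} (hU : IsOpen U) (hT : IsOpen T)
    (hI : Icc (0:ℝ) 1 ⊆ T) (hΦ : ContDiffOn ℝ n Φ (U ×ˢ T)) :
    ContDiffOn ℝ n (fun x => ∫ t in (0:ℝ)..1, Φ (x, t)) U := by
  set e : ULift.{u} F ≃ₗᵢ[ℝ] F := LinearIsometryEquiv.ulift ℝ F with he_def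
  have hΦ' : ContDiffOn ℝ n (fun p => e.symm (Φ p)) (U ×ˢ T) :=
    (e.symm.toContinuousLinearEquiv.toContinuousLinearMap.contDiff).comp_contDiffOn hΦ
  have h := paramInt.{u, v} n hU hT hI hΦ'
  have h2 : ContDiffOn ℝ n
      (fun x => e (∫ t in (0:ℝ)..1, e.symm (Φ (x, t)))) U :=
    (e.toContinuousLinearEquiv.toContinuousLinearMap.contDiff).comp_contDiffOn h
  refine h2.congr fun x hx => ?_
  have hint : IntervalIntegrable (fun t => Φ (x, t)) volume 0 1 := by
    refine (hΦ.continuousOn.comp (Continuous.continuousOn (by fun_prop))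
      (fun t (ht : t ∈ uIcc (0:ℝ) 1) => ⟨hx, hI (by rwa [uIcc_of_le zero_le_one] at ht)⟩)
        ).intervalIntegrable
  have hcc := (e.symm.toContinuousLinearEquiv.toContinuousLinearMap).intervalIntegral_comp_comm hint
  have h3 : (∫ t in (0:ℝ)..1, e.symm (Φ (x, t))) = e.symm (∫ t in (0:ℝ)..1, Φ (x, t)) := hcc
  rw [h3]
  simp

theorem factor_integral {E : Type*} [NormedAddCommGroup E] [NormedSpace ℝ E]
    {G : Type*} [NormedAddCommGroup G] [NormedSpace ℝ G] [CompleteSpace G]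
    {M : Set E} (hM : IsOpen M) {k : ℕ} (hk : 1 ≤ k) {f : E → G}
    (hf : ContDiffOn ℝ k f M) {x w : E}
    (hseg : ∀ t ∈ Icc (0:ℝ) 1, x - t • w ∈ M) (hend : f (x - w) = 0) :
    f x = ∫ t in (0:ℝ)..1, fderiv ℝ f (x - t • w) w := by
  have h1k : (1 : WithTop ℕ∞) ≤ (k : WithTop ℕ∞) := by exact_mod_cast hk
  have hder : ∀ t ∈ uIcc (0:ℝ) 1, HasDerivAt (fun s => f (x - s • w))
      (-(fderiv ℝ f (x - t • w) w)) t := by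
    intro t ht
    rw [uIcc_of_le zero_le_one] at ht
    have hmem := hseg t ht
    have hfd : HasFDerivAt f (fderiv ℝ f (x - t • w)) (x - t • w) :=
      ((hf.contDiffAt (hM.mem_nhds hmem)).differentiableAt (by exact_mod_cast (show k ≠ 0 by omega))).hasFDerivAt
    have hc : HasDerivAt (fun s : ℝ => x - s • w) (-w) t := by
      simpa using ((hasDerivAt_id t).smul_const w).const_sub x
    have h2 := hfd.comp_hasDerivAt t hc
    simpa [Function.comp_def] using h2
  have hcont : ContinuousOn (fun t => fderiv ℝ f (x - t • w) w) (uIcc (0:ℝ) 1) := by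
    rw [uIcc_of_le zero_le_one]
    have h1 : ContinuousOn (fderiv ℝ f) M := hf.continuousOn_fderiv_of_isOpen hM h1k
    exact (h1.comp (Continuous.continuousOn (by fun_prop)) hseg).clm_apply continuousOn_const
  have hint : IntervalIntegrable (fun t => -(fderiv ℝ f (x - t • w) w)) volume 0 1 :=
    hcont.neg.intervalIntegrable
  have heq := intervalIntegral.integral_eq_sub_of_hasDerivAt hder hint
  rw [intervalIntegral.integral_neg] at heq
  simp only [one_smul, zero_smul, sub_zero, hend, zero_sub] at heq
  exact (neg_inj.1 heq).symm

theorem exists_loc {E : Type*} [NormedAddCommGroup E] [NormedSpace ℝ E] [CompleteSpace E]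
    {M : Set E} (hM : IsOpen M) {k : ℕ} (hk : 1 ≤ k) {φ : E → ℝ}
    (hφ : ContDiffOn ℝ k φ M) {m₀ : E} (hm₀ : m₀ ∈ M) (h0 : φ m₀ = 0)
    (hd : fderiv ℝ φ m₀ ≠ 0) :
    ∃ (v : E) (ψ : E → ℝ) (U : Set E), fderiv ℝ φ m₀ v = 1 ∧ IsOpen U ∧ m₀ ∈ U ∧ U ⊆ M ∧
      ContDiffOn ℝ k ψ U ∧ ψ m₀ = 0 ∧ HasFDerivAt ψ (fderiv ℝ φ m₀) m₀ ∧
      (∀ x ∈ U, ∀ t ∈ Icc (-1:ℝ) 2, x - (t * ψ x) • v ∈ M) ∧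
      (∀ x ∈ U, φ (x - ψ x • v) = 0) ∧
      (∀ x ∈ U, φ x = 0 → ψ x = 0) := by
  have h1k : (1 : WithTop ℕ∞) ≤ (k : WithTop ℕ∞) := by exact_mod_cast hk
  set ℓ := fderiv ℝ φ m₀ with hℓ_def
  obtain ⟨u₀, hu₀⟩ : ∃ u₀, ℓ u₀ ≠ 0 := by
    by_contra h; push_neg at h
    exact hd (ContinuousLinearMap.ext fun u => by simp [h u])
  set v : E := (ℓ u₀)⁻¹ • u₀ with hv_def
  have hv : ℓ v = 1 := by
    rw [hv_def, ContinuousLinearMap.map_smul, smul_eq_mul, inv_mul_cancel₀ hu₀]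
  have hφat : ContDiffAt ℝ k φ m₀ := hφ.contDiffAt (hM.mem_nhds hm₀)
  have hφ' : HasFDerivAt φ ℓ m₀ := (hφat.differentiableAt (by exact_mod_cast (show k ≠ 0 by omega))).hasFDerivAt
  set N : (E × ℝ) →L[ℝ] E :=
    (ContinuousLinearMap.fst ℝ E ℝ) - (ContinuousLinearMap.snd ℝ E ℝ).smulRight v with hN_def
  have hNapp : ∀ p : E × ℝ, N p = p.1 - p.2 • v := fun p => rfl
  have hN0 : N (m₀, (0:ℝ)) = m₀ := by rw [hNapp]; simp
  set Θ : E × ℝ → E × ℝ := fun p => (p.1, φ (N p)) with hΘ_def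
  have hΘat : ContDiffAt ℝ k Θ (m₀, 0) := by
    refine contDiffAt_fst.prodMk ?_
    exact (hN0 ▸ hφat).comp (m₀, 0) N.contDiff.contDiffAt
  set B : (E × ℝ) →L[ℝ] (E × ℝ) :=
    (ContinuousLinearMap.fst ℝ E ℝ).prod (ℓ.comp N) with hB_def
  have hBapp : ∀ p : E × ℝ, B p = (p.1, ℓ p.1 - p.2) := by
    intro p
    have : ℓ (N p) = ℓ p.1 - p.2 := by
      rw [hNapp, map_sub, ContinuousLinearMap.map_smul, smul_eq_mul, hv, mul_one]
    simp [hB_def, this]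
  have hinv : Function.LeftInverse B B := by
    intro p; rw [hBapp, hBapp]; simp
  set A : (E × ℝ) ≃L[ℝ] (E × ℝ) := ContinuousLinearEquiv.equivOfInverse B B hinv hinv with hA_def
  have hΘ' : HasFDerivAt Θ (A : (E × ℝ) →L[ℝ] (E × ℝ)) (m₀, 0) := by
    have h1 : HasFDerivAt (fun p : E × ℝ => φ (N p)) (ℓ.comp N) (m₀, 0) :=
      (hN0 ▸ hφ').comp (m₀, 0) N.hasFDerivAt
    exact (hasFDerivAt_fst (p := ((m₀ : E), (0:ℝ)))).prodMk h1
  have hs : HasStrictFDerivAt Θ (A : (E × ℝ) →L[ℝ] (E × ℝ)) (m₀, 0) :=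
    hΘat.hasStrictFDerivAt' hΘ' (by exact_mod_cast (show k ≠ 0 by omega))
  set Θinv : E × ℝ → E × ℝ := hs.localInverse Θ A (m₀, 0) with hΘinv_def
  have hΘm : Θ (m₀, 0) = (m₀, 0) := by
    rw [hΘ_def]; simp only [hN0, h0]
  have hinvCD : ContDiffAt ℝ k Θinv (m₀, 0) := by
    have := hΘat.to_localInverse (f' := A) hΘ' (by exact_mod_cast (show k ≠ 0 by omega))
    rwa [hΘm] at this
  have hinvm : Θinv (m₀, 0) = (m₀, 0) := by
    have := hs.localInverse_apply_image
    rwa [hΘm] at this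
  set ψ : E → ℝ := fun x => (Θinv (x, (0:ℝ))).2 with hψ_def
  have hψ0 : ψ m₀ = 0 := by rw [hψ_def]; simp [hinvm]
  have hjCD : ContDiffAt ℝ k (fun x : E => (x, (0:ℝ))) m₀ := contDiffAt_id.prodMk contDiffAt_const
  have hψCD : ContDiffAt ℝ k ψ m₀ := by
    have hmid : ContDiffAt ℝ k (fun x => Θinv (x, (0:ℝ))) m₀ := hinvCD.comp m₀ hjCD
    exact contDiff_snd.contDiffAt.comp m₀ hmid
  -- derivative of ψ
  have hψd : HasFDerivAt ψ ℓ m₀ := by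
    have hstrictinv : HasStrictFDerivAt Θinv ((A.symm : (E × ℝ) →L[ℝ] (E × ℝ))) (m₀, 0) := by
      have := hs.to_localInverse
      rwa [hΘm] at this
    have hj : HasFDerivAt (fun x : E => (x, (0:ℝ))) (ContinuousLinearMap.inl ℝ E ℝ) m₀ :=
      (hasFDerivAt_id m₀).prodMk (hasFDerivAt_const (0:ℝ) m₀)
    have hchain := (hstrictinv.hasFDerivAt.comp m₀ hj).snd
    have hEq : (ContinuousLinearMap.snd ℝ E ℝ).comp
        (((A.symm : (E × ℝ) →L[ℝ] (E × ℝ))).comp (ContinuousLinearMap.inl ℝ E ℝ)) = ℓ := by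
      ext u
      have : (A.symm : (E × ℝ) →L[ℝ] (E × ℝ)) (u, (0:ℝ)) = B (u, (0:ℝ)) := rfl
      simp only [ContinuousLinearMap.comp_apply, ContinuousLinearMap.inl_apply, this, hBapp,
        ContinuousLinearMap.coe_snd', sub_zero]
    rwa [hEq] at hchain
  -- eventual properties
  have hjc : Tendsto (fun x : E => (x, (0:ℝ))) (𝓝 m₀) (𝓝 (m₀, (0:ℝ))) :=
    (continuous_id.prodMk continuous_const).continuousAt
  have hA_right : ∀ᶠ q in 𝓝 (m₀, (0:ℝ)), Θ (Θinv q) = q := by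
    have := hs.eventually_right_inverse
    rwa [hΘm] at this
  have E1 : ∀ᶠ x in 𝓝 m₀, Θ (Θinv (x, 0)) = (x, 0) := hjc.eventually hA_right
  have E2 : ∀ᶠ x in 𝓝 m₀, Θinv (Θ (x, 0)) = (x, 0) := hjc.eventually hs.eventually_left_inverse
  obtain ⟨s, hs_nhds, hψOn⟩ : ∃ s ∈ 𝓝 m₀, ContDiffOn ℝ k ψ s :=
    hψCD.contDiffOn le_rfl (by intro h; exact absurd h (by simp))
  obtain ⟨ε, hε, hball⟩ := Metric.isOpen_iff.1 hM m₀ hm₀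
  have E3 : ∀ᶠ x in 𝓝 m₀, ‖x - m₀‖ + 2 * |ψ x| * ‖v‖ < ε := by
    have h1 : ContinuousAt ψ m₀ := hψCD.continuousAt
    have hcont : Tendsto (fun x => ‖x - m₀‖ + 2 * |ψ x| * ‖v‖) (𝓝 m₀) (𝓝 0) := by
      have h2 : Tendsto (fun x => ‖x - m₀‖ + 2 * |ψ x| * ‖v‖) (𝓝 m₀)
          (𝓝 (‖m₀ - m₀‖ + 2 * |ψ m₀| * ‖v‖)) := by
        have h3 : ContinuousAt (fun x => ‖x - m₀‖ + 2 * |ψ x| * ‖v‖) m₀ := by fun_prop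
        exact h3
      simpa [hψ0] using h2
    exact hcont.eventually_lt_const hε
  have hall : ∀ᶠ x in 𝓝 m₀, x ∈ s ∧ x ∈ M ∧ Θ (Θinv (x, 0)) = (x, 0) ∧
      Θinv (Θ (x, 0)) = (x, 0) ∧ ‖x - m₀‖ + 2 * |ψ x| * ‖v‖ < ε := by
    filter_upwards [hs_nhds, hM.mem_nhds hm₀, E1, E2, E3] with x h1 h2 h3 h4 h5
    exact ⟨h1, h2, h3, h4, h5⟩
  obtain ⟨U, hU₀sub, hUopen, hm₀U⟩ := _root_.mem_nhds_iff.1 hall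
  have hUP : ∀ x ∈ U, x ∈ s ∧ x ∈ M ∧ Θ (Θinv (x, 0)) = (x, 0) ∧
      Θinv (Θ (x, 0)) = (x, 0) ∧ ‖x - m₀‖ + 2 * |ψ x| * ‖v‖ < ε :=
    fun x hx => hU₀sub hx
  refine ⟨v, ψ, U, hv, hUopen, hm₀U, fun x hx => (hUP x hx).2.1, hψOn.mono
    (fun x hx => (hUP x hx).1), hψ0, hψd, ?_, ?_, ?_⟩
  · -- segment property
    intro x hx t ht
    apply hball
    rw [mem_ball_iff_norm]
    have h5 := (hUP x hx).2.2.2.2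
    have habs : |t| ≤ 2 := abs_le.2 ⟨by linarith [ht.1], ht.2⟩
    calc ‖x - (t * ψ x) • v - m₀‖ = ‖(x - m₀) - (t * ψ x) • v‖ := by rw [sub_right_comm]
      _ ≤ ‖x - m₀‖ + ‖(t * ψ x) • v‖ := norm_sub_le _ _
      _ = ‖x - m₀‖ + |t| * |ψ x| * ‖v‖ := by
          rw [norm_smul, Real.norm_eq_abs, abs_mul]
      _ ≤ ‖x - m₀‖ + 2 * |ψ x| * ‖v‖ := by
          have : |t| * |ψ x| * ‖v‖ ≤ 2 * |ψ x| * ‖v‖ := by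
            apply mul_le_mul_of_nonneg_right _ (norm_nonneg v)
            exact mul_le_mul_of_nonneg_right habs (abs_nonneg _)
          linarith
      _ < ε := h5
  · -- φ (x - ψ x • v) = 0
    intro x hx
    have h3 := (hUP x hx).2.2.1
    have h1 : (Θinv (x, (0:ℝ))).1 = x := congrArg Prod.fst h3
    have h2 : φ (N (Θinv (x, (0:ℝ)))) = 0 := congrArg Prod.snd h3
    rw [hNapp] at h2
    rw [h1] at h2
    exact h2
  · -- φ x = 0 → ψ x = 0
    intro x hx hx0
    have h4 := (hUP x hx).2.2.2.1
    have hΘx : Θ (x, (0:ℝ)) = (x, (0:ℝ)) := by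
      rw [hΘ_def]; simp only [hNapp]; simp [hx0]
    rw [hΘx] at h4
    rw [hψ_def]
    simp [h4]

noncomputable section

/-- Blow-up proposition (Euclidean/Banach form): dividing a C^k map vanishing on the
zero level set of a scalar function with nonvanishing derivative there loses exactly
one degree of differentiability. -/
theorem stmt5 {E F : Type*} [NormedAddCommGroup E] [NormedSpace ℝ E] [CompleteSpace E]
    [NormedAddCommGroup F] [NormedSpace ℝ F] [CompleteSpace F]
    (M : Set E) (hM : IsOpen M) (k : ℕ) (hk : 1 ≤ k)
    (φ : E → ℝ) (hφ : ContDiffOn ℝ k φ M)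
    (hφd : ∀ m ∈ M, φ m = 0 → fderiv ℝ φ m ≠ 0)
    (f : E → F) (hf : ContDiffOn ℝ k f M)
    (hf0 : ∀ m ∈ M, φ m = 0 → f m = 0) :
    -- (i) existence and uniqueness of e(m)
    (∀ m ∈ M, φ m = 0 →
      ∃! e : F, ∀ u : E, fderiv ℝ f m u = fderiv ℝ φ m u • e) ∧
    -- (ii) the blown-up map f̂ is C^{k-1} on M
    (∀ e : E → F,
      (∀ m ∈ M, φ m = 0 → ∀ u : E, fderiv ℝ f m u = fderiv ℝ φ m u • e m) →
      ContDiffOn ℝ (k - 1)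
        (fun m => if φ m = 0 then e m else (φ m)⁻¹ • f m) M) := by
  have h1k : (1 : WithTop ℕ∞) ≤ (k : WithTop ℕ∞) := by exact_mod_cast hk
  have hcast : ((k - 1 : ℕ) : WithTop ℕ∞) + 1 = (k : WithTop ℕ∞) := by
    exact_mod_cast (by omega : (k - 1) + 1 = k)
  have hle : ((k - 1 : ℕ) : WithTop ℕ∞) ≤ (k : WithTop ℕ∞) := by
    exact_mod_cast Nat.sub_le k 1
  constructor
  · -- part (i)
    intro m hm h0
    obtain ⟨v, ψ, U, hv, hUo, hmU, hUM, hψCD, hψ0, hψd, hseg, hφψ, hzero⟩ :=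
      exists_loc hM hk hφ hm h0 (hφd m hm h0)
    have hkey : ∀ u : E, fderiv ℝ φ m u = 0 → fderiv ℝ f m u = 0 := by
      intro u hu
      set c : ℝ → E := fun t => (m + t • u) - ψ (m + t • u) • v with hc_def
      have hline : ∀ᶠ t in 𝓝 (0:ℝ), m + t • u ∈ U := by
        have hcont : Tendsto (fun t : ℝ => m + t • u) (𝓝 0) (𝓝 m) := by
          have h2 : ContinuousAt (fun t : ℝ => m + t • u) 0 := by fun_prop
          have h3 : Tendsto (fun t : ℝ => m + t • u) (𝓝 0) (𝓝 (m + (0:ℝ) • u)) := h2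
          simpa using h3
        exact hcont.eventually (hUo.eventually_mem hmU)
      have hfc0 : ∀ᶠ t in 𝓝 (0:ℝ), f (c t) = 0 := by
        filter_upwards [hline] with t hti
        have h1 : c t ∈ M := by
          have h2 := hseg _ hti 1 ⟨by norm_num, by norm_num⟩
          simpa [hc_def] using h2
        exact hf0 _ h1 (hφψ _ hti)
      have hlineDeriv : HasDerivAt (fun t : ℝ => m + t • u) u 0 := by
        simpa using ((hasDerivAt_id (0:ℝ)).smul_const u).const_add m
      have hψat : HasFDerivAt ψ (fderiv ℝ φ m) (m + (0:ℝ) • u) := by simpa using hψd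
      have hψline : HasDerivAt (fun t : ℝ => ψ (m + t • u)) 0 0 := by
        have h2 := hψat.comp_hasDerivAt 0 hlineDeriv
        simpa [hu, Function.comp_def] using h2
      have hcD : HasDerivAt c u 0 := by
        have h2 := hlineDeriv.sub (hψline.smul_const v)
        simpa [hc_def, Pi.sub_def] using h2
      have hc0 : c 0 = m := by simp [hc_def, hψ0]
      have hfm : HasFDerivAt f (fderiv ℝ f m) (c 0) := by
        rw [hc0]
        exact ((hf.contDiffAt (hM.mem_nhds hm)).differentiableAt (by exact_mod_cast (show k ≠ 0 by omega))).hasFDerivAt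
      have hfc : HasDerivAt (fun t => f (c t)) (fderiv ℝ f m u) 0 := by
        simpa [Function.comp_def] using hfm.comp_hasDerivAt 0 hcD
      have hzero' : HasDerivAt (fun t => f (c t)) 0 0 :=
        (hasDerivAt_const (0:ℝ) (0:F)).congr_of_eventuallyEq
          (by filter_upwards [hfc0] with t ht using ht)
      exact hfc.unique hzero'
    refine ⟨fderiv ℝ f m v, fun u => ?_, fun e' he' => ?_⟩
    · have h2 := hkey (u - fderiv ℝ φ m u • v)
        (by rw [map_sub, ContinuousLinearMap.map_smul, hv, smul_eq_mul, mul_one, sub_self])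
      rw [map_sub, ContinuousLinearMap.map_smul] at h2
      exact sub_eq_zero.1 h2
    · have h3 := he' v
      rw [hv, one_smul] at h3
      exact h3.symm
  · -- part (ii)
    intro e he m hm
    suffices h : ContDiffAt ℝ (k - 1 : ℕ) (fun x => if φ x = 0 then e x else (φ x)⁻¹ • f x) m by
      exact h.contDiffWithinAt
    by_cases h0 : φ m = 0
    · obtain ⟨v, ψ, U, hv, hUo, hmU, hUM, hψCD, hψ0, hψd, hseg, hφψ, hzero⟩ :=
        exists_loc hM hk hφ hm h0 (hφd m hm h0)
      set g : E → F := fun x => ∫ t in (0:ℝ)..1, fderiv ℝ f (x - (t * ψ x) • v) v with hg_def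
      set χ : E → ℝ := fun x => ∫ t in (0:ℝ)..1, fderiv ℝ φ (x - (t * ψ x) • v) v with hχ_def
      have hmaps : MapsTo (fun p : E × ℝ => p.1 - (p.2 * ψ p.1) • v)
          (U ×ˢ Ioo (-1:ℝ) 2) M := fun p hp => hseg p.1 hp.1 p.2 (Ioo_subset_Icc_self hp.2)
      have hθ : ContDiffOn ℝ k (fun p : E × ℝ => p.1 - (p.2 * ψ p.1) • v)
          (U ×ˢ Ioo (-1:ℝ) 2) := by
        refine ContDiffOn.sub (contDiff_fst.contDiffOn) ?_
        refine ContDiffOn.smul ?_ contDiffOn_const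
        exact (contDiff_snd.contDiffOn).mul
          (hψCD.comp (contDiff_fst.contDiffOn) (fun p hp => hp.1))
      have hIccIoo : Icc (0:ℝ) 1 ⊆ Ioo (-1:ℝ) 2 :=
        Icc_subset_Ioo (by norm_num) (by norm_num)
      have hDf : ContDiffOn ℝ (k - 1 : ℕ) (fderiv ℝ f) M :=
        hf.fderiv_of_isOpen hM (le_of_eq hcast)
      have hDφ : ContDiffOn ℝ (k - 1 : ℕ) (fderiv ℝ φ) M :=
        hφ.fderiv_of_isOpen hM (le_of_eq hcast)
      have hΦf : ContDiffOn ℝ (k - 1 : ℕ)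
          (fun p : E × ℝ => fderiv ℝ f (p.1 - (p.2 * ψ p.1) • v) v)
          (U ×ˢ Ioo (-1:ℝ) 2) :=
        (hDf.comp (hθ.of_le hle) hmaps).clm_apply contDiffOn_const
      have hΦφ : ContDiffOn ℝ (k - 1 : ℕ)
          (fun p : E × ℝ => fderiv ℝ φ (p.1 - (p.2 * ψ p.1) • v) v)
          (U ×ˢ Ioo (-1:ℝ) 2) :=
        (hDφ.comp (hθ.of_le hle) hmaps).clm_apply contDiffOn_const
      have hg : ContDiffOn ℝ (k - 1 : ℕ) g U :=
        paramInt' (k-1) hUo isOpen_Ioo hIccIoo hΦf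
      have hχ : ContDiffOn ℝ (k - 1 : ℕ) χ U :=
        paramInt' (k-1) hUo isOpen_Ioo hIccIoo hΦφ
      have hseg1 : ∀ x ∈ U, ∀ t ∈ Icc (0:ℝ) 1, x - t • (ψ x • v) ∈ M := by
        intro x hx t ht
        have h2 := hseg x hx t ⟨by linarith [ht.1], by linarith [ht.2]⟩
        rw [smul_smul]
        exact h2
      have hend : ∀ x ∈ U, f (x - ψ x • v) = 0 := by
        intro x hx
        have h2 := hseg x hx 1 ⟨by norm_num, by norm_num⟩
        rw [one_mul] at h2
        exact hf0 _ h2 (hφψ x hx)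
      have hfψ : ∀ x ∈ U, f x = ψ x • g x := by
        intro x hx
        have h2 := factor_integral hM hk hf (hseg1 x hx) (hend x hx)
        rw [h2, hg_def]
        have h3 : (fun t : ℝ => fderiv ℝ f (x - t • (ψ x • v)) (ψ x • v))
            = fun t : ℝ => ψ x • fderiv ℝ f (x - (t * ψ x) • v) v := by
          funext t
          rw [smul_smul, ContinuousLinearMap.map_smul]
        rw [h3, intervalIntegral.integral_smul]
      have hφχ : ∀ x ∈ U, φ x = ψ x * χ x := by
        intro x hx
        have hend' : φ (x - ψ x • v) = 0 := hφψ x hx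
        have h2 := factor_integral hM hk hφ (hseg1 x hx) hend'
        rw [h2, hχ_def]
        have h3 : (fun t : ℝ => fderiv ℝ φ (x - t • (ψ x • v)) (ψ x • v))
            = fun t : ℝ => ψ x * fderiv ℝ φ (x - (t * ψ x) • v) v := by
          funext t
          rw [smul_smul, ContinuousLinearMap.map_smul, smul_eq_mul]
        rw [h3, intervalIntegral.integral_const_mul]
      have hχm : χ m = 1 := by
        have h3 : χ m = ∫ _ in (0:ℝ)..1, (1:ℝ) := by
          rw [hχ_def]
          refine intervalIntegral.integral_congr fun t ht => ?_
          rw [hψ0, mul_zero, zero_smul, sub_zero, hv]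
        rw [h3, intervalIntegral.integral_const]
        simp
      have hχne : ∀ᶠ x in 𝓝 m, χ x ≠ 0 :=
        ((hχ.continuousOn.continuousAt (hUo.mem_nhds hmU))).eventually_ne
          (by rw [hχm]; exact one_ne_zero)
      have heq : (fun x => if φ x = 0 then e x else (φ x)⁻¹ • f x)
          =ᶠ[𝓝 m] fun x => (χ x)⁻¹ • g x := by
        filter_upwards [hUo.eventually_mem hmU, hχne] with x hxU hχx
        by_cases hx0 : φ x = 0
        · rw [if_pos hx0]
          have hψx := hzero x hxU hx0
          have hgx : g x = fderiv ℝ f x v := by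
            have h3 : g x = ∫ _ in (0:ℝ)..1, fderiv ℝ f x v := by
              rw [hg_def]
              refine intervalIntegral.integral_congr fun t ht => ?_
              rw [hψx, mul_zero, zero_smul, sub_zero]
            rw [h3, intervalIntegral.integral_const]
            simp
          have hχxval : χ x = fderiv ℝ φ x v := by
            have h3 : χ x = ∫ _ in (0:ℝ)..1, fderiv ℝ φ x v := by
              rw [hχ_def]
              refine intervalIntegral.integral_congr fun t ht => ?_
              rw [hψx, mul_zero, zero_smul, sub_zero]
            rw [h3, intervalIntegral.integral_const]
            simp
          have hev := he x (hUM hxU) hx0 v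
          rw [hgx, hev, ← hχxval, inv_smul_smul₀ hχx]
        · rw [if_neg hx0]
          have h1 := hfψ x hxU
          have h2 := hφχ x hxU
          have hψne : ψ x ≠ 0 := fun h => hx0 (by rw [h2, h, zero_mul])
          rw [h1, h2, smul_smul]
          congr 1
          field_simp
      have htarget : ContDiffAt ℝ (k - 1 : ℕ) (fun x => (χ x)⁻¹ • g x) m := by
        refine ContDiffAt.smul ?_ (hg.contDiffAt (hUo.mem_nhds hmU))
        exact (hχ.contDiffAt (hUo.mem_nhds hmU)).inv (by rw [hχm]; exact one_ne_zero)
      exact htarget.congr_of_eventuallyEq heq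
    · have hne : ∀ᶠ x in 𝓝 m, φ x ≠ 0 :=
        (hφ.continuousOn.continuousAt (hM.mem_nhds hm)).eventually_ne h0
      have heq : (fun x => if φ x = 0 then e x else (φ x)⁻¹ • f x)
          =ᶠ[𝓝 m] fun x => (φ x)⁻¹ • f x := by
        filter_upwards [hne] with x hx
        rw [if_neg hx]
      have htarget : ContDiffAt ℝ (k - 1 : ℕ) (fun x => (φ x)⁻¹ • f x) m := by
        refine ContDiffAt.of_le ?_ hle
        exact ContDiffAt.smul ((hφ.contDiffAt (hM.mem_nhds hm)).inv h0)
          (hf.contDiffAt (hM.mem_nhds hm))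
      exact htarget.congr_of_eventuallyEq heq

end
end

section
/- Let E, E′ be real Banach spaces, M ⊆ E and N ⊆ E′ open, P a real Banach space, and h_M : M → ℝ, h_N : N → ℝ C¹ functions whose derivatives are nonzero at every point of their respective zero sets. Let f₁, f₂ : M → N and g₁, g₂ : N → P be C¹ maps with h_N ∘ f_i = h_M for i = 1, 2, and suppose f₂ = f₁ + O(h_M^r) and g₂ = g₁ + O(h_N^r) for some r ≥ 1. Then g₂ ∘ f₂ = g₁ ∘ f₁ + O(h_M^r), and for every m ∈ M with h_M(m) = 0, writing n := f₁(m) = f₂(m): res^r(g₂ ∘ f₂, g₁ ∘ f₁)(m) = res^r(g₂, g₁)(n) + Dg₁(n)·res^r(f₂, f₁)(m). -/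
open Set

noncomputable section

/-- `v` is the value at `m₀` of a residual witness for `f₂ = f₁ + O(φ^r)`:
on a neighborhood of `m₀` inside `M`, `f₂ - f₁ = φ^r · δ` with `δ` continuous at `m₀`
and `δ m₀ = v`. -/
def IsResidualAt {E F : Type*} [NormedAddCommGroup E] [NormedSpace ℝ E]
    [NormedAddCommGroup F] [NormedSpace ℝ F]
    (M : Set E) (φ : E → ℝ) (r : ℕ) (f₁ f₂ : E → F) (m₀ : E) (v : F) : Prop :=
  ∃ U : Set E, IsOpen U ∧ m₀ ∈ U ∧ U ⊆ M ∧
    ∃ δ : E → F, ContinuousAt δ m₀ ∧ δ m₀ = v ∧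
      ∀ m ∈ U, f₂ m - f₁ m = φ m ^ r • δ m

/-- `f₂ = f₁ + O(φ^r)` on `M`: at every point of the zero set of `φ` in `M` there is
a residual. -/
def BigOOrder {E F : Type*} [NormedAddCommGroup E] [NormedSpace ℝ E]
    [NormedAddCommGroup F] [NormedSpace ℝ F]
    (M : Set E) (φ : E → ℝ) (r : ℕ) (f₁ f₂ : E → F) : Prop :=
  ∀ m₀ ∈ M, φ m₀ = 0 → ∃ v : F, IsResidualAt M φ r f₁ f₂ m₀ v


theorem key {E E' P : Type*}
    [NormedAddCommGroup E] [NormedSpace ℝ E]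
    [NormedAddCommGroup E'] [NormedSpace ℝ E']
    [NormedAddCommGroup P] [NormedSpace ℝ P]
    (M : Set E) (N : Set E') (hM : IsOpen M) (hN : IsOpen N)
    (hM2 : E → ℝ) (hN2 : E' → ℝ)
    (f₁ f₂ : E → E') (g₁ g₂ : E' → P)
    (hf₁m : MapsTo f₁ M N)
    (hf₁ : ContDiffOn ℝ 1 f₁ M) (hf₂ : ContDiffOn ℝ 1 f₂ M)
    (hg₁ : ContDiffOn ℝ 1 g₁ N)
    (hcomp₂ : ∀ m ∈ M, hN2 (f₂ m) = hM2 m)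
    (r : ℕ) (hr : 1 ≤ r)
    (m₀ : E) (hm₀ : m₀ ∈ M) (h0 : hM2 m₀ = 0)
    (vf : E') (vg : P)
    (hvf : IsResidualAt M hM2 r f₁ f₂ m₀ vf)
    (hvg : IsResidualAt N hN2 r g₁ g₂ (f₁ m₀) vg) :
    IsResidualAt M hM2 r (g₁ ∘ f₁) (g₂ ∘ f₂) m₀ (vg + fderiv ℝ g₁ (f₁ m₀) vf) := by
  obtain ⟨Uf, hUfo, hm₀Uf, hUfM, δf, hδfc, hδf0, hδfeq⟩ := hvf
  obtain ⟨Vg, hVgo, hnVg, hVgN, δg, hδgc, hδg0, hδgeq⟩ := hvg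
  have hrne : r ≠ 0 := Nat.one_le_iff_ne_zero.mp hr
  have hnN : f₁ m₀ ∈ N := hf₁m hm₀
  have hf₂₁ : f₂ m₀ = f₁ m₀ := by
    have := hδfeq m₀ hm₀Uf
    rw [h0, zero_pow hrne, zero_smul, sub_eq_zero] at this
    exact this
  have hf₁c : ContinuousAt f₁ m₀ :=
    hf₁.continuousOn.continuousAt (hM.mem_nhds hm₀)
  have hf₂c : ContinuousAt f₂ m₀ :=
    hf₂.continuousOn.continuousAt (hM.mem_nhds hm₀)
  have hg₁d : ∀ y ∈ N, HasFDerivAt g₁ (fderiv ℝ g₁ y) y := fun y hy =>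
    ((hg₁.differentiableOn one_ne_zero).differentiableAt (hN.mem_nhds hy)).hasFDerivAt
  have hDgc : ContinuousAt (fderiv ℝ g₁) (f₁ m₀) :=
    (hg₁.continuousOn_fderiv_of_isOpen hN le_rfl).continuousAt (hN.mem_nhds hnN)
  set n := f₁ m₀ with hn
  set L := fderiv ℝ g₁ n with hL
  -- the combined residual witness
  set δ₂ : E → P := fun m =>
    if hM2 m = 0 then L (δf m) else (hM2 m ^ r)⁻¹ • (g₁ (f₂ m) - g₁ (f₁ m)) with hδ₂
  set δ : E → P := fun m => δg (f₂ m) + δ₂ m with hδ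
  -- continuity of δ₂ at m₀
  have hδ₂m₀ : δ₂ m₀ = L vf := by simp [hδ₂, h0, hδf0]
  have hδ₂c : ContinuousAt δ₂ m₀ := by
    rw [ContinuousAt, hδ₂m₀]
    rw [Metric.tendsto_nhds]
    intro ε hε
    set K := ‖L‖ with hK
    have hK0 : 0 ≤ K := norm_nonneg _
    have hv0 : (0:ℝ) < ‖vf‖ + 1 := by positivity
    set ε₁ := ε / (4 * (‖vf‖ + 1)) with hε₁
    have hε₁0 : 0 < ε₁ := by positivity
    set ε₂ := ε / (2 * (K + 1)) with hε₂
    have hε₂0 : 0 < ε₂ := by positivity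
    -- choose ρ
    have hball : ∀ᶠ y in nhds n, y ∈ N ∧ ‖fderiv ℝ g₁ y - L‖ < ε₁ := by
      filter_upwards [hN.mem_nhds hnN,
        Metric.tendsto_nhds.mp hDgc ε₁ hε₁0] with y h1 h2
      exact ⟨h1, by rwa [dist_eq_norm] at h2⟩
    obtain ⟨ρ, hρ0, hρ⟩ := Metric.eventually_nhds_iff_ball.mp hball
    -- mean value estimate on the ball
    have mvt : ∀ a ∈ Metric.ball n ρ, ∀ b ∈ Metric.ball n ρ,
        ‖g₁ b - g₁ a - L (b - a)‖ ≤ ε₁ * ‖b - a‖ := by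
      intro a ha b hb
      have h1 : ∀ x ∈ Metric.ball n ρ,
          HasFDerivWithinAt (fun y => g₁ y - L y) (fderiv ℝ g₁ x - L) (Metric.ball n ρ) x := by
        intro x hx
        exact ((hg₁d x (hρ x hx).1).sub L.hasFDerivAt).hasFDerivWithinAt
      have h2 : ∀ x ∈ Metric.ball n ρ, ‖fderiv ℝ g₁ x - L‖ ≤ ε₁ := fun x hx =>
        (hρ x hx).2.le
      have := Convex.norm_image_sub_le_of_norm_hasFDerivWithin_le h1 h2
        (convex_ball n ρ) ha hb
      calc ‖g₁ b - g₁ a - L (b - a)‖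
          = ‖(g₁ b - L b) - (g₁ a - L a)‖ := by rw [map_sub]; congr 1; abel
        _ ≤ ε₁ * ‖b - a‖ := this
    filter_upwards [hUfo.mem_nhds hm₀Uf,
      hf₁c (Metric.ball_mem_nhds n hρ0),
      hf₂c (by rw [hf₂₁]; exact Metric.ball_mem_nhds n hρ0),
      hδfc (by rw [hδf0]; exact Metric.ball_mem_nhds vf (lt_min one_pos hε₂0))]
      with m hmU hm1 hm2 hm3
    have hd3 : ‖δf m - vf‖ < min 1 ε₂ := by rwa [← dist_eq_norm, ← Metric.mem_ball]
    have hLd : ‖L (δf m) - L vf‖ ≤ ε / 2 := by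
      rw [← map_sub]
      have hK1 : (0:ℝ) < K + 1 := by positivity
      calc ‖L (δf m - vf)‖ ≤ K * ‖δf m - vf‖ := L.le_opNorm _
        _ ≤ (K + 1) * ε₂ := by
            have h1 : ‖δf m - vf‖ ≤ ε₂ := (hd3.trans_le (min_le_right _ _)).le
            nlinarith [norm_nonneg (δf m - vf)]
        _ = ε / 2 := by rw [hε₂]; field_simp
    rw [dist_eq_norm]
    by_cases h : hM2 m = 0
    · have : δ₂ m = L (δf m) := by simp [hδ₂, h]
      rw [this]
      calc ‖L (δf m) - L vf‖ ≤ ε / 2 := hLd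
        _ < ε := by linarith
    · have hpow : hM2 m ^ r ≠ 0 := pow_ne_zero _ h
      have heq := hδfeq m hmU
      have hmvt := mvt (f₁ m) hm1 (f₂ m) hm2
      have key2 : δ₂ m - L (δf m)
          = (hM2 m ^ r)⁻¹ • (g₁ (f₂ m) - g₁ (f₁ m) - L (f₂ m - f₁ m)) := by
        have h3 : (hM2 m ^ r)⁻¹ • L (f₂ m - f₁ m) = L (δf m) := by
          rw [heq, map_smul, inv_smul_smul₀ hpow]
        simp only [hδ₂, if_neg h, ← h3, ← smul_sub]
      have hnd : ‖f₂ m - f₁ m‖ = |hM2 m ^ r| * ‖δf m‖ := by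
        rw [heq, norm_smul, Real.norm_eq_abs]
      have habs : |hM2 m ^ r| ≠ 0 := abs_ne_zero.mpr hpow
      have hest : ‖δ₂ m - L (δf m)‖ ≤ ε₁ * ‖δf m‖ := by
        rw [key2, norm_smul, Real.norm_eq_abs, abs_inv]
        rw [hnd] at hmvt
        calc |hM2 m ^ r|⁻¹ * ‖g₁ (f₂ m) - g₁ (f₁ m) - L (f₂ m - f₁ m)‖
            ≤ |hM2 m ^ r|⁻¹ * (ε₁ * (|hM2 m ^ r| * ‖δf m‖)) := by
              gcongr
          _ = ε₁ * ‖δf m‖ := by field_simp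
      have hδfb : ‖δf m‖ ≤ ‖vf‖ + 1 := by
        have h1 : ‖δf m - vf‖ ≤ 1 := (hd3.trans_le (min_le_left _ _)).le
        calc ‖δf m‖ = ‖δf m - vf + vf‖ := by rw [sub_add_cancel]
          _ ≤ ‖δf m - vf‖ + ‖vf‖ := norm_add_le _ _
          _ ≤ ‖vf‖ + 1 := by linarith
      have hest2 : ‖δ₂ m - L (δf m)‖ ≤ ε / 4 := by
        calc ‖δ₂ m - L (δf m)‖ ≤ ε₁ * ‖δf m‖ := hest
          _ ≤ ε₁ * (‖vf‖ + 1) := by gcongr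
          _ = ε / 4 := by rw [hε₁]; field_simp
      calc ‖δ₂ m - L vf‖ ≤ ‖δ₂ m - L (δf m)‖ + ‖L (δf m) - L vf‖ :=
            norm_sub_le_norm_sub_add_norm_sub _ _ _
        _ ≤ ε / 4 + ε / 2 := add_le_add hest2 hLd
        _ < ε := by linarith
  -- assemble the witness
  refine ⟨(M ∩ f₂ ⁻¹' Vg) ∩ Uf,
    ((hf₂.continuousOn.isOpen_inter_preimage hM hVgo).inter hUfo),
    ⟨⟨hm₀, by simp only [mem_preimage]; rw [hf₂₁]; exact hnVg⟩, hm₀Uf⟩,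
    fun m hm => hm.1.1, δ, ?_, ?_, ?_⟩
  · exact ((hf₂₁ ▸ hδgc).comp hf₂c).add hδ₂c
  · simp only [hδ]
    rw [hδ₂m₀, hf₂₁, hδg0]
  · intro m hm
    obtain ⟨⟨hmM, hmV⟩, hmU⟩ := hm
    have e1 : g₂ (f₂ m) - g₁ (f₂ m) = hM2 m ^ r • δg (f₂ m) := by
      rw [← hcomp₂ m hmM]
      exact hδgeq (f₂ m) hmV
    have e2 : g₁ (f₂ m) - g₁ (f₁ m) = hM2 m ^ r • δ₂ m := by
      by_cases h : hM2 m = 0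
      · have : f₂ m = f₁ m := by
          have := hδfeq m hmU
          rw [h, zero_pow hrne, zero_smul, sub_eq_zero] at this
          exact this
        rw [this, h, zero_pow hrne, zero_smul, sub_self]
      · simp only [hδ₂, if_neg h]
        rw [smul_inv_smul₀ (pow_ne_zero _ h)]
    calc (g₂ ∘ f₂) m - (g₁ ∘ f₁) m
        = (g₂ (f₂ m) - g₁ (f₂ m)) + (g₁ (f₂ m) - g₁ (f₁ m)) := by
          simp only [Function.comp_apply]; abel
      _ = hM2 m ^ r • δg (f₂ m) + hM2 m ^ r • δ₂ m := by rw [e1, e2]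
      _ = hM2 m ^ r • δ m := by rw [← smul_add]

/-- Composition rule for orders and residuals. -/
theorem stmt6 {E E' P : Type*}
    [NormedAddCommGroup E] [NormedSpace ℝ E] [CompleteSpace E]
    [NormedAddCommGroup E'] [NormedSpace ℝ E'] [CompleteSpace E']
    [NormedAddCommGroup P] [NormedSpace ℝ P] [CompleteSpace P]
    (M : Set E) (N : Set E') (hM : IsOpen M) (hN : IsOpen N)
    (hM2 : E → ℝ) (hN2 : E' → ℝ)
    (hhM : ContDiffOn ℝ 1 hM2 M) (hhN : ContDiffOn ℝ 1 hN2 N)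
    (hMd : ∀ m ∈ M, hM2 m = 0 → fderiv ℝ hM2 m ≠ 0)
    (hNd : ∀ x ∈ N, hN2 x = 0 → fderiv ℝ hN2 x ≠ 0)
    (f₁ f₂ : E → E') (g₁ g₂ : E' → P)
    (hf₁m : MapsTo f₁ M N) (hf₂m : MapsTo f₂ M N)
    (hf₁ : ContDiffOn ℝ 1 f₁ M) (hf₂ : ContDiffOn ℝ 1 f₂ M)
    (hg₁ : ContDiffOn ℝ 1 g₁ N) (hg₂ : ContDiffOn ℝ 1 g₂ N)
    (hcomp₁ : ∀ m ∈ M, hN2 (f₁ m) = hM2 m)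
    (hcomp₂ : ∀ m ∈ M, hN2 (f₂ m) = hM2 m)
    (r : ℕ) (hr : 1 ≤ r)
    (hOf : BigOOrder M hM2 r f₁ f₂) (hOg : BigOOrder N hN2 r g₁ g₂) :
    BigOOrder M hM2 r (g₁ ∘ f₁) (g₂ ∘ f₂) ∧
    ∀ m ∈ M, hM2 m = 0 → ∀ (vf : E') (vg : P),
      IsResidualAt M hM2 r f₁ f₂ m vf →
      IsResidualAt N hN2 r g₁ g₂ (f₁ m) vg →
      IsResidualAt M hM2 r (g₁ ∘ f₁) (g₂ ∘ f₂) m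
        (vg + fderiv ℝ g₁ (f₁ m) vf) := by
  refine ⟨?_, ?_⟩
  · intro m₀ hm₀ h0
    obtain ⟨vf, hvf⟩ := hOf m₀ hm₀ h0
    obtain ⟨vg, hvg⟩ := hOg (f₁ m₀) (hf₁m hm₀) (by rw [hcomp₁ m₀ hm₀]; exact h0)
    exact ⟨vg + fderiv ℝ g₁ (f₁ m₀) vf,
      key M N hM hN hM2 hN2 f₁ f₂ g₁ g₂ hf₁m hf₁ hf₂ hg₁ hcomp₂ r hr m₀ hm₀ h0 vf vg hvf hvg⟩
  · intro m hm h0 vf vg hvf hvg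
    exact key M N hM hN hM2 hN2 f₁ f₂ g₁ g₂ hf₁m hf₁ hf₂ hg₁ hcomp₂ r hr m hm h0 vf vg hvf hvg

end
end

section
/- Let E, F be real Banach spaces, M ⊆ E open, h : M → ℝ a C^k function whose derivative is nonzero at every point of h⁻¹(0), and f₁, f₂ : M → F C^k maps vanishing identically on h⁻¹(0), with k ≥ r ≥ 2. Let f̂₁, f̂₂ : M → F be the C^{k−1} maps obtained by division: f̂_i(m) = f_i(m)/h(m) for h(m) ≠ 0, extended over h⁻¹(0) by the unique continuous extension (f̂_i(m) = e_i(m) where Df_i(m)·u = (dh(m)·u)·e_i(m) for all u ∈ E). If f₂ = f₁ + O(h^r), then f̂₂ = f̂₁ + O(h^{r−1}) and res^{r−1}(f̂₂, f̂₁)(m) = res^r(f₂, f₁)(m) for every m ∈ h⁻¹(0). -/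
open Set

noncomputable section

/-- Division by the step function decreases contact order by exactly one and
preserves the residual. -/
theorem stmt7 {E F : Type*}
    [NormedAddCommGroup E] [NormedSpace ℝ E] [CompleteSpace E]
    [NormedAddCommGroup F] [NormedSpace ℝ F] [CompleteSpace F]
    (M : Set E) (hMo : IsOpen M) (k r : ℕ) (hr : 2 ≤ r) (hkr : r ≤ k)
    (φ : E → ℝ) (hφ : ContDiffOn ℝ k φ M)
    (hφd : ∀ m ∈ M, φ m = 0 → fderiv ℝ φ m ≠ 0)
    (f₁ f₂ : E → F)
    (hf₁ : ContDiffOn ℝ k f₁ M) (hf₂ : ContDiffOn ℝ k f₂ M)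
    (hf₁0 : ∀ m ∈ M, φ m = 0 → f₁ m = 0)
    (hf₂0 : ∀ m ∈ M, φ m = 0 → f₂ m = 0)
    (fh₁ fh₂ : E → F)
    (hfh₁ : ∀ m ∈ M, φ m ≠ 0 → fh₁ m = (φ m)⁻¹ • f₁ m)
    (hfh₂ : ∀ m ∈ M, φ m ≠ 0 → fh₂ m = (φ m)⁻¹ • f₂ m)
    (hfh₁0 : ∀ m ∈ M, φ m = 0 → ∀ u : E, fderiv ℝ f₁ m u = fderiv ℝ φ m u • fh₁ m)
    (hfh₂0 : ∀ m ∈ M, φ m = 0 → ∀ u : E, fderiv ℝ f₂ m u = fderiv ℝ φ m u • fh₂ m)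
    (hO : BigOOrder M φ r f₁ f₂) :
    BigOOrder M φ (r - 1) fh₁ fh₂ ∧
    ∀ m ∈ M, φ m = 0 → ∀ v : F,
      IsResidualAt M φ r f₁ f₂ m v → IsResidualAt M φ (r - 1) fh₁ fh₂ m v := by
  classical
  have hk1 : (1 : WithTop ℕ∞) ≤ (k : WithTop ℕ∞) := by exact_mod_cast (by omega : 1 ≤ k)
  -- key: fh₁ = fh₂ on zeros of φ in M
  have heq : ∀ m ∈ M, φ m = 0 → fh₁ m = fh₂ m := by
    intro m hm hφm
    obtain ⟨v, U, hU, hmU, hUM, δ, hδc, hδv, hδe⟩ := hO m hm hφm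
    have hd₁ : DifferentiableAt ℝ f₁ m :=
      (hf₁.contDiffAt (hMo.mem_nhds hm)).differentiableAt (by exact_mod_cast (by omega : k ≠ 0))
    have hd₂ : DifferentiableAt ℝ f₂ m :=
      (hf₂.contDiffAt (hMo.mem_nhds hm)).differentiableAt (by exact_mod_cast (by omega : k ≠ 0))
    have hdφ : DifferentiableAt ℝ φ m :=
      (hφ.contDiffAt (hMo.mem_nhds hm)).differentiableAt (by exact_mod_cast (by omega : k ≠ 0))
    have hφO : (fun y => φ y) =O[nhds m] (fun y => y - m) := by
      simpa [hφm] using hdφ.hasFDerivAt.isBigO_sub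
    have hT : Filter.Tendsto (fun y => φ y ^ (r - 1) • δ y) (nhds m) (nhds 0) := by
      have h1 : Filter.Tendsto (fun y => φ y ^ (r - 1)) (nhds m) (nhds 0) := by
        have := (hdφ.continuousAt.pow (r - 1) : ContinuousAt (fun y => φ y ^ (r - 1)) m)
        simpa only [ContinuousAt, Pi.pow_def, hφm, zero_pow (by omega : r - 1 ≠ 0)] using this
      simpa using h1.smul hδc
    have hlo : (fun y => φ y ^ (r - 1) • δ y) =o[nhds m] (fun _ : E => (1 : ℝ)) :=
      (Asymptotics.isLittleO_one_iff ℝ).mpr hT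
    have hlo2 : (fun y => φ y ^ r • δ y) =o[nhds m] (fun y => y - m) := by
      have h := hφO.norm_right.smul_isLittleO hlo
      have hre : (fun y => φ y ^ r • δ y)
          = fun y => φ y • (φ y ^ (r - 1) • δ y) := by
        funext y
        rw [smul_smul]
        congr 1
        rw [← pow_succ', Nat.sub_add_cancel (by omega : 1 ≤ r)]
      rw [hre, ← Asymptotics.isLittleO_norm_right]
      simpa using h
    have hg0 : HasFDerivAt (fun y => f₂ y - f₁ y) (0 : E →L[ℝ] F) m := by
      refine .of_isLittleO ?_
      have hev : (fun y => φ y ^ r • δ y) =ᶠ[nhds m]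
          fun y => f₂ y - f₁ y - (f₂ m - f₁ m) - (0 : E →L[ℝ] F) (y - m) := by
        filter_upwards [hU.mem_nhds hmU] with y hy
        simp [← hδe y hy, hf₁0 m hm hφm, hf₂0 m hm hφm]
      exact hlo2.congr' hev Filter.EventuallyEq.rfl
    have hg : HasFDerivAt (fun y => f₂ y - f₁ y)
        (fderiv ℝ f₂ m - fderiv ℝ f₁ m) m := hd₂.hasFDerivAt.sub hd₁.hasFDerivAt
    have h0 : fderiv ℝ f₂ m - fderiv ℝ f₁ m = 0 := hg.unique hg0
    obtain ⟨u, hu⟩ : ∃ u, fderiv ℝ φ m u ≠ 0 := by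
      by_contra h
      push_neg at h
      exact hφd m hm hφm (ContinuousLinearMap.ext fun u => by simpa using h u)
    have hsame : fderiv ℝ f₁ m u = fderiv ℝ f₂ m u := by
      have := ContinuousLinearMap.ext_iff.mp h0 u
      simp only [ContinuousLinearMap.sub_apply, ContinuousLinearMap.zero_apply,
        sub_eq_zero] at this
      exact this.symm
    have : fderiv ℝ φ m u • fh₁ m = fderiv ℝ φ m u • fh₂ m := by
      rw [← hfh₁0 m hm hφm u, ← hfh₂0 m hm hφm u]
      exact hsame
    exact smul_right_injective F hu this
  have key2 : ∀ m ∈ M, φ m = 0 → ∀ v : F,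
      IsResidualAt M φ r f₁ f₂ m v → IsResidualAt M φ (r - 1) fh₁ fh₂ m v := by
    rintro m hm hφm v ⟨U, hU, hmU, hUM, δ, hδc, hδv, hδe⟩
    refine ⟨U, hU, hmU, hUM, δ, hδc, hδv, fun y hy => ?_⟩
    by_cases hφy : φ y = 0
    · rw [heq y (hUM hy) hφy, sub_self, hφy, zero_pow (by omega : r - 1 ≠ 0), zero_smul]
    · rw [hfh₁ y (hUM hy) hφy, hfh₂ y (hUM hy) hφy, ← smul_sub, hδe y hy, smul_smul]
      congr 1
      rw [show φ y ^ r = φ y * φ y ^ (r - 1) from by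
        rw [← pow_succ', Nat.sub_add_cancel (by omega : 1 ≤ r)]]
      exact inv_mul_cancel_left₀ hφy _
  refine ⟨fun m hm hφm => ?_, key2⟩
  obtain ⟨v, hv⟩ := hO m hm hφm
  exact ⟨v, key2 m hm hφm v hv⟩

end
end

section
/- Let k ≥ 1, let (ψ, α⁺, α⁻) be a C^k discretization of the tangent bundle of ℝ^n, and let U ⊆ ℝ × (ℝ^n × ℝ^n) be an open set containing {0} × (ℝ^n × ℝ^n) such that for each h ≠ 0 the map w ↦ (∂⁺_h(w), ∂⁻_h(w)) is a diffeomorphism from {w : (h, w) ∈ U} onto its image. Let (h, q⁺, q⁻) ↦ L^{QQ}_h(q⁺, q⁻) be a map ℝ × ℝ^n × ℝ^n → ℝ that is C¹ in (q⁺, q⁻), and define L_h(w) := L^{QQ}_h(∂⁺_h(w), ∂⁻_h(w)). Then for every h ≠ 0 and all v, ṽ with (h, v), (h, ṽ) ∈ U, the triple (h, v, ṽ) is critical for (L_h, ψ, α⁺, α⁻) if and only if ∂⁺_h(v) = ∂⁻_h(ṽ) and D₁L^{QQ}_h(∂⁺_h(v), ∂⁻_h(v)) + D₂L^{QQ}_h(∂⁺_h(ṽ),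 ∂⁻_h(ṽ)) = 0, where D₁, D₂ denote partial derivatives in the first and second ℝ^n arguments; the latter is the standard discrete Euler–Lagrange criticality on ℝ^n × ℝ^n. -/
open Set

noncomputable section

/-- The model for ℝ^n. -/
abbrev Vec (n : ℕ) : Type := Fin n → ℝ

/-- The phase space ℝ^n × ℝ^n. -/
abbrev Phase (n : ℕ) : Type := Vec n × Vec n

/-- A C^k discretization of the tangent bundle of ℝ^n. -/
structure TBDisc (n : ℕ) (k : ℕ) : Type where
  ψ : ℝ → ℝ → Phase n → Vec n
  dom : Set (ℝ × ℝ × Phase n)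
  dom_open : IsOpen dom
  dom_zero : ∀ w : Phase n, (0, 0, w) ∈ dom
  ψ_cont : ContinuousOn (fun p : ℝ × ℝ × Phase n => ψ p.1 p.2.1 p.2.2) dom
  a : ℝ
  a_pos : 0 < a
  αp : ℝ → ℝ
  αm : ℝ → ℝ
  αp_smooth : ContDiffOn ℝ 1 αp (Ico 0 a)
  αm_smooth : ContDiffOn ℝ 1 αm (Ico 0 a)
  αp_nonneg : ∀ h ∈ Ico (0:ℝ) a, 0 ≤ αp h
  αm_nonpos : ∀ h ∈ Ico (0:ℝ) a, αm h ≤ 0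
  α_sub : ∀ h ∈ Ico (0:ℝ) a, αp h - αm h = h
  ψ_init : ∀ h w, (h, (0:ℝ), w) ∈ dom → ψ h 0 w = w.1
  ψ_vel : ∀ h w, (h, (0:ℝ), w) ∈ dom → HasDerivAt (fun t => ψ h t w) w.2 0
  bdom : Set (ℝ × Phase n)
  bdom_open : IsOpen bdom
  bdom_zero : ∀ w : Phase n, ((0:ℝ), w) ∈ bdom
  bp_smooth : ContDiffOn ℝ k (fun p : ℝ × Phase n => ψ p.1 (αp p.1) p.2) bdom
  bm_smooth : ContDiffOn ℝ k (fun p : ℝ × Phase n => ψ p.1 (αm p.1) p.2) bdom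
  αpdot : ℝ
  αmdot : ℝ
  αp_deriv : HasDerivWithinAt αp αpdot (Ico 0 a) 0
  αm_deriv : HasDerivWithinAt αm αmdot (Ico 0 a) 0
  bp_deriv : ∀ w : Phase n,
    HasDerivWithinAt (fun h => ψ h (αp h) w) (αpdot • w.2) (Ici 0) 0
  bm_deriv : ∀ w : Phase n,
    HasDerivWithinAt (fun h => ψ h (αm h) w) (αmdot • w.2) (Ici 0) 0

/-- The boundary map ∂⁺. -/
def TBDisc.bp {n k : ℕ} (D : TBDisc n k) (h : ℝ) (w : Phase n) : Vec n :=
  D.ψ h (D.αp h) w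

/-- The boundary map ∂⁻. -/
def TBDisc.bm {n k : ℕ} (D : TBDisc n k) (h : ℝ) (w : Phase n) : Vec n :=
  D.ψ h (D.αm h) w

/-- Criticality of a triple (h, v, ṽ) for a discrete variational principle with
boundary maps `bp`, `bm` and discrete Lagrangian `Lh`. -/
def IsCriticalPt {n : ℕ} (bp bm : ℝ → Phase n → Vec n) (Lh : ℝ → Phase n → ℝ)
    (h : ℝ) (v vt : Phase n) : Prop :=
  bp h v = bm h vt ∧
  ∀ δv δvt : Phase n,
    fderiv ℝ (bm h) v δv = 0 →
    fderiv ℝ (bp h) vt δvt = 0 →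
    fderiv ℝ (bp h) v δv = fderiv ℝ (bm h) vt δvt →
    fderiv ℝ (Lh h) v δv + fderiv ℝ (Lh h) vt δvt = 0

/-- A C^k discretization of a Lagrangian system L. -/
structure LDisc (n k : ℕ) (L : Phase n → ℝ) extends TBDisc n k where
  Lh : ℝ → Phase n → ℝ
  Lh_smooth : ContDiff ℝ k (fun p : ℝ × Phase n => Lh p.1 p.2)
  Lh_zero : ∀ w : Phase n, Lh 0 w = 0
  Lh_deriv : ∀ w : Phase n, HasDerivAt (fun h => Lh h w) (L w) 0

/-- Regularity of a Lagrangian: the fiber second derivative is everywhere invertible. -/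
def IsRegularLagrangian {n : ℕ} (L : Phase n → ℝ) : Prop :=
  ∀ q v : Vec n, Function.Bijective
    (fun u : Vec n => fderiv ℝ (fun w : Vec n => fderiv ℝ (fun x : Vec n => L (q, x)) w) v u)

/-- An Euler–Lagrange flow for the Lagrangian L. -/
structure ELFlow (n : ℕ) (L : Phase n → ℝ) where
  flow : ℝ → Phase n → Phase n
  dom : Set (ℝ × Phase n)
  dom_open : IsOpen dom
  dom_zero : ∀ w : Phase n, ((0:ℝ), w) ∈ dom
  init : ∀ w : Phase n, flow 0 w = w
  vel : ∀ (w : Phase n) (t : ℝ), (t, w) ∈ dom →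
    HasDerivAt (fun s => (flow s w).1) ((flow t w).2) t
  el : ∀ (w : Phase n) (t : ℝ), (t, w) ∈ dom →
    HasDerivAt (fun s => fderiv ℝ (fun u : Vec n => L ((flow s w).1, u)) (flow s w).2)
      (fderiv ℝ (fun x : Vec n => L (x, (flow t w).2)) (flow t w).1) t


/-- Equivalence of discrete mechanics on TQ with the standard discrete mechanics
on Q × Q: criticality on TQ corresponds to the discrete Euler–Lagrange criterion. -/
theorem stmt9 {n k : ℕ} (hk : 1 ≤ k) (D : TBDisc n k)
    (U : Set (ℝ × Phase n)) (hU : IsOpen U)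
    (hU0 : ∀ w : Phase n, ((0:ℝ), w) ∈ U) (hUb : U ⊆ D.bdom)
    -- for each h ≠ 0 the map w ↦ (∂⁺_h(w), ∂⁻_h(w)) is a diffeomorphism onto its image
    (hdiffeo : ∀ h : ℝ, h ≠ 0 →
      ∃ V : Set (Vec n × Vec n), IsOpen V ∧
        (fun w : Phase n => (D.bp h w, D.bm h w)) '' {w : Phase n | (h, w) ∈ U} = V ∧
        ∃ g : Vec n × Vec n → Phase n, ContDiffOn ℝ k g V ∧
          ∀ w : Phase n, (h, w) ∈ U → g (D.bp h w, D.bm h w) = w)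
    (LQQ : ℝ → Vec n → Vec n → ℝ)
    (hLQQ : ∀ h : ℝ, ContDiff ℝ 1 (fun p : Vec n × Vec n => LQQ h p.1 p.2)) :
    ∀ h : ℝ, h ≠ 0 → ∀ v vt : Phase n, (h, v) ∈ U → (h, vt) ∈ U →
      (IsCriticalPt D.bp D.bm (fun h w => LQQ h (D.bp h w) (D.bm h w)) h v vt ↔
        (D.bp h v = D.bm h vt ∧
          fderiv ℝ (fun q : Vec n => LQQ h q (D.bm h v)) (D.bp h v)
            + fderiv ℝ (fun q : Vec n => LQQ h (D.bp h vt) q) (D.bm h vt) = 0)) := by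
  intro h hne v vt hv hvt
  obtain ⟨V, hVopen, hVimg, g, hg, hginv⟩ := hdiffeo h hne
  set S : Set (Phase n) := {w : Phase n | (h, w) ∈ U} with hSdef
  have hvS : v ∈ S := hv
  have hvtS : vt ∈ S := hvt
  have hSopen : IsOpen S := hU.preimage (Continuous.prodMk_right h)
  have hk1 : (1 : WithTop ℕ∞) ≤ (k : ℕ) := by exact_mod_cast hk
  set F : Phase n → Vec n × Vec n := fun w => (D.bp h w, D.bm h w) with hFdef
  -- differentiability of boundary maps
  have hbp : ∀ w ∈ S, DifferentiableAt ℝ (D.bp h) w := by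
    intro w hw
    have h1 : ContDiffAt ℝ k (fun p : ℝ × Phase n => D.ψ p.1 (D.αp p.1) p.2) (h, w) :=
      D.bp_smooth.contDiffAt (D.bdom_open.mem_nhds (hUb hw))
    have h2 := h1.differentiableAt (lt_of_lt_of_le zero_lt_one hk1).ne'
    exact h2.comp w ((differentiableAt_const h).prodMk differentiableAt_id)
  have hbm : ∀ w ∈ S, DifferentiableAt ℝ (D.bm h) w := by
    intro w hw
    have h1 : ContDiffAt ℝ k (fun p : ℝ × Phase n => D.ψ p.1 (D.αm p.1) p.2) (h, w) :=
      D.bm_smooth.contDiffAt (D.bdom_open.mem_nhds (hUb hw))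
    have h2 := h1.differentiableAt (lt_of_lt_of_le zero_lt_one hk1).ne'
    exact h2.comp w ((differentiableAt_const h).prodMk differentiableAt_id)
  have hF : ∀ w ∈ S, DifferentiableAt ℝ F w := fun w hw => (hbp w hw).prodMk (hbm w hw)
  have hFderiv : ∀ w ∈ S, fderiv ℝ F w
      = (fderiv ℝ (D.bp h) w).prod (fderiv ℝ (D.bm h) w) := fun w hw =>
    ((hbp w hw).hasFDerivAt.prodMk (hbm w hw).hasFDerivAt).fderiv
  -- surjectivity of fderiv F
  have hsurj : ∀ w ∈ S, Function.Surjective (fderiv ℝ F w) := by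
    intro w hw
    have hFw : F w ∈ V := by rw [← hVimg]; exact ⟨w, hw, rfl⟩
    have hgd : DifferentiableAt ℝ g (F w) :=
      (hg.contDiffAt (hVopen.mem_nhds hFw)).differentiableAt (lt_of_lt_of_le zero_lt_one hk1).ne'
    have hcomp : fderiv ℝ (g ∘ F) w = (fderiv ℝ g (F w)).comp (fderiv ℝ F w) :=
      fderiv_comp w hgd (hF w hw)
    have hid : fderiv ℝ (g ∘ F) w = ContinuousLinearMap.id ℝ (Phase n) := by
      have heq : (g ∘ F) =ᶠ[nhds w] id := by
        filter_upwards [hSopen.mem_nhds hw] with x hx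
        exact hginv x hx
      rw [heq.fderiv_eq]; exact fderiv_id
    have key : ∀ u, fderiv ℝ g (F w) (fderiv ℝ F w u) = u := by
      intro u
      have := congrFun (congrArg (fun (T : Phase n →L[ℝ] Phase n) => (T : Phase n → Phase n))
        (hcomp.symm.trans hid)) u
      simpa using this
    have hinj : Function.Injective (fderiv ℝ F w) := by
      intro a b hab
      rw [← key a, ← key b, hab]
    have hinj' : Function.Injective ((fderiv ℝ F w).toLinearMap) := fun a b hab => hinj hab
    exact LinearMap.injective_iff_surjective.mp hinj'
  -- derivative of the composed Lagrangian
  set f : Phase n → ℝ := fun p => LQQ h p.1 p.2 with hfdef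
  have hfC : ContDiff ℝ 1 f := hLQQ h
  have hfd : ∀ x : Phase n, DifferentiableAt ℝ f x := fun x => hfC.differentiable one_ne_zero x
  have hLh : ∀ w ∈ S, fderiv ℝ (fun w => LQQ h (D.bp h w) (D.bm h w)) w
      = (fderiv ℝ f (F w)).comp (fderiv ℝ F w) := fun w hw =>
    fderiv_comp w (hfd (F w)) (hF w hw)
  -- partial derivatives
  have hpartL : ∀ a b : Vec n, fderiv ℝ (fun q : Vec n => LQQ h q b) a
      = (fderiv ℝ f (a, b)).comp (ContinuousLinearMap.inl ℝ (Vec n) (Vec n)) := by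
    intro a b
    exact (((hfd (a, b)).hasFDerivAt).comp a (hasFDerivAt_prodMk_left (𝕜 := ℝ) a b)).fderiv
  have hpartR : ∀ a b : Vec n, fderiv ℝ (fun q : Vec n => LQQ h a q) b
      = (fderiv ℝ f (a, b)).comp (ContinuousLinearMap.inr ℝ (Vec n) (Vec n)) := by
    intro a b
    exact (((hfd (a, b)).hasFDerivAt).comp b (hasFDerivAt_prodMk_right (𝕜 := ℝ) a b)).fderiv
  have hsplit : ∀ (x : Phase n) (u : Vec n × Vec n),
      fderiv ℝ f x u = fderiv ℝ f x (u.1, 0) + fderiv ℝ f x (0, u.2) := by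
    intro x u
    rw [← (fderiv ℝ f x).map_add]
    congr 1
    ext i <;> simp
  constructor
  · rintro ⟨hmatch, hcrit⟩
    refine ⟨hmatch, ?_⟩
    apply ContinuousLinearMap.ext
    intro u
    obtain ⟨δv, hδv⟩ := hsurj v hvS ((u, 0) : Vec n × Vec n)
    obtain ⟨δvt, hδvt⟩ := hsurj vt hvtS ((0, u) : Vec n × Vec n)
    rw [hFderiv v hvS] at hδv
    rw [hFderiv vt hvtS] at hδvt
    have h1a : fderiv ℝ (D.bp h) v δv = u := congrArg Prod.fst hδv
    have h1b : fderiv ℝ (D.bm h) v δv = 0 := congrArg Prod.snd hδv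
    have h2a : fderiv ℝ (D.bp h) vt δvt = 0 := congrArg Prod.fst hδvt
    have h2b : fderiv ℝ (D.bm h) vt δvt = u := congrArg Prod.snd hδvt
    have key := hcrit δv δvt h1b h2a (by rw [h1a, h2b])
    rw [hLh v hvS, hLh vt hvtS] at key
    simp only [ContinuousLinearMap.comp_apply, hFderiv v hvS, hFderiv vt hvtS] at key
    simp only [ContinuousLinearMap.prod_apply, h1a, h1b, h2a, h2b] at key
    simp only [ContinuousLinearMap.add_apply, ContinuousLinearMap.zero_apply,
      hpartL (D.bp h v) (D.bm h v), hpartR (D.bp h vt) (D.bm h vt),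
      ContinuousLinearMap.comp_apply, ContinuousLinearMap.inl_apply,
      ContinuousLinearMap.inr_apply]
    exact key
  · rintro ⟨hmatch, hEL⟩
    refine ⟨hmatch, ?_⟩
    intro δv δvt hbm0 hbp0 hmix
    rw [hLh v hvS, hLh vt hvtS]
    simp only [ContinuousLinearMap.comp_apply, hFderiv v hvS, hFderiv vt hvtS,
      ContinuousLinearMap.prod_apply]
    rw [hbm0, hbp0, ← hmix]
    have happ := congrFun (congrArg (fun (T : Vec n →L[ℝ] ℝ) => (T : Vec n → ℝ)) hEL)
      (fderiv ℝ (D.bp h) v δv)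
    simp only [ContinuousLinearMap.add_apply, ContinuousLinearMap.zero_apply,
      hpartL (D.bp h v) (D.bm h v), hpartR (D.bp h vt) (D.bm h vt),
      ContinuousLinearMap.comp_apply, ContinuousLinearMap.inl_apply,
      ContinuousLinearMap.inr_apply] at happ
    exact happ


end
end

section
/- Let k ≥ 2 and let (ψ, α⁺, α⁻) be a C^k discretization of the tangent bundle of ℝ^n, with boundary maps ∂⁺_h, ∂⁻_h. Then there is an open set A ⊆ ℝ × (ℝ^n × ℝ^n) containing {0} × (ℝ^n × ℝ^n) such that for all (h, w) ∈ A the derivatives (with respect to w) of w ↦ ∂⁺_h(w) and w ↦ ∂⁻_h(w) are surjective, so that C := {(h, v, ṽ) : (h, v) ∈ A, (h, ṽ) ∈ A, ∂⁺_h(v) = ∂⁻_h(ṽ)} is a C^k submanifold of ℝ × (ℝ^n × ℝ^n) × (ℝ^n × ℝ^n); moreover the function φ̂ : C → ℝ^n defined by φ̂(h, v, ṽ) := (∂⁺_h(ṽ) − ∂⁻_h(v))/(2h) for h ≠ 0 and φ̂(0, (q, v), (q, ṽ)) := (v + ṽ)/2 for h = 0 (note that at h = 0 membership in C forces the two base points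 to coincide) is of class C^{k−1} on C. -/
open Set

noncomputable section

open MeasureTheory intervalIntegral

section PI

variable {E : Type} [NormedAddCommGroup E] [NormedSpace ℝ E] [FiniteDimensional ℝ E]

/-- Smoothness of a parametric integral over a star-shaped (in the first variable) open set. -/
theorem paramInt_s10 (m : ℕ) :
    ∀ {F : Type} [NormedAddCommGroup F] [NormedSpace ℝ F] [CompleteSpace F]
      {U : Set (ℝ × E)} (_hU : IsOpen U)
      (_hstar : ∀ p ∈ U, ∀ t ∈ Icc (0:ℝ) 1, ((t * p.1, p.2) : ℝ × E) ∈ U)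
      {f : ℝ × ℝ × E → F}, ContDiffOn ℝ m f (univ ×ˢ U) →
      ContDiffOn ℝ m (fun p : ℝ × E => ∫ t in (0:ℝ)..1, f (t, t * p.1, p.2)) U := by
  induction m with
  | zero =>
    intro F _ _ _ U hU hstar f hf
    simp only [Nat.cast_zero, contDiffOn_zero] at hf ⊢
    intro p₀ hp₀
    apply ContinuousAt.continuousWithinAt
    obtain ⟨ε, hε, hball⟩ := Metric.isOpen_iff.1 hU p₀ hp₀
    set r := ε / 2 with hr
    have hrpos : 0 < r := by positivity
    have hrε : r < ε := by rw [hr]; linarith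
    have hcb : Metric.closedBall p₀ r ⊆ U := fun x hx =>
      hball (lt_of_le_of_lt hx hrε)
    set c : ℝ × (ℝ × E) → ℝ × ℝ × E := fun q => (q.1, q.1 * q.2.1, q.2.2) with hc
    have hcont_c : Continuous c := by fun_prop
    set K : Set (ℝ × ℝ × E) := c '' (Icc (0:ℝ) 1 ×ˢ Metric.closedBall p₀ r) with hK
    have hKcomp : IsCompact K :=
      (isCompact_Icc.prod (isCompact_closedBall p₀ r)).image hcont_c
    have hKsub : K ⊆ univ ×ˢ U := by
      rintro _ ⟨⟨t, p⟩, ⟨ht, hp⟩, rfl⟩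
      exact ⟨mem_univ _, hstar p (hcb hp) t ht⟩
    have hUC := hKcomp.uniformContinuousOn_of_continuous (hf.mono hKsub)
    rw [Metric.continuousAt_iff]
    intro δ hδ
    obtain ⟨η, hη, hUC'⟩ := Metric.uniformContinuousOn_iff.1 hUC (δ/2) (by linarith)
    refine ⟨min η r, lt_min hη hrpos, fun {p} hp => ?_⟩
    have hpball : p ∈ Metric.closedBall p₀ r :=
      Metric.mem_closedBall.2 (le_of_lt (lt_of_lt_of_le hp (min_le_right _ _)))
    have hp₀ball : p₀ ∈ Metric.closedBall p₀ r := Metric.mem_closedBall_self hrpos.le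
    have hint : ∀ q ∈ Metric.closedBall p₀ r,
        IntervalIntegrable (fun t => f (t, t * q.1, q.2)) volume 0 1 := by
      intro q hq
      apply ContinuousOn.intervalIntegrable
      have : ContinuousOn (fun t : ℝ => ((t, q) : ℝ × (ℝ × E))) (uIcc (0:ℝ) 1) := by fun_prop
      apply (hf.mono hKsub).comp (hcont_c.comp_continuousOn this)
      intro t ht
      exact ⟨(t, q), ⟨by rwa [uIcc_of_le (by norm_num)] at ht, hq⟩, rfl⟩
    rw [dist_eq_norm, ← intervalIntegral.integral_sub (hint p hpball) (hint p₀ hp₀ball)]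
    have hbound : ∀ t ∈ Set.uIoc (0:ℝ) 1,
        ‖f (t, t * p.1, p.2) - f (t, t * p₀.1, p₀.2)‖ ≤ δ/2 := by
      intro t ht
      have ht' : t ∈ Icc (0:ℝ) 1 := mem_Icc_of_Ioc (by rwa [uIoc_of_le (by norm_num)] at ht)
      have h1 : c (t, p) ∈ K := mem_image_of_mem c ⟨ht', hpball⟩
      have h2 : c (t, p₀) ∈ K := mem_image_of_mem c ⟨ht', hp₀ball⟩
      have hdist : dist (c (t, p)) (c (t, p₀)) < η := by
        have h0 : dist (c (t, p)) (c (t, p₀)) ≤ dist p p₀ := by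
          rw [hc]
          simp only [Prod.dist_eq, dist_self, Real.dist_eq]
          have habs : |t| ≤ 1 := abs_le.2 ⟨by linarith [ht'.1], ht'.2⟩
          have hmul : |t * p.1 - t * p₀.1| ≤ |p.1 - p₀.1| := by
            rw [← mul_sub, abs_mul]
            exact mul_le_of_le_one_left (abs_nonneg _) habs
          exact max_le (le_max_of_le_right dist_nonneg)
            (max_le_max hmul le_rfl)
        exact lt_of_le_of_lt h0 (lt_of_lt_of_le hp (min_le_left _ _))
      have := hUC' _ h1 _ h2 hdist
      rw [dist_eq_norm] at this
      exact this.le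
    calc ‖∫ t in (0:ℝ)..1, (f (t, t * p.1, p.2) - f (t, t * p₀.1, p₀.2))‖
        ≤ δ/2 * |1 - 0| := intervalIntegral.norm_integral_le_of_norm_le_const hbound
      _ < δ := by norm_num; linarith
  | succ m ih =>
    intro F _ _ _ U hU hstar f hf
    have hU' : IsOpen ((univ ×ˢ U) : Set (ℝ × ℝ × E)) := isOpen_univ.prod hU
    have hm1 : (1 : WithTop ℕ∞) ≤ ((m + 1 : ℕ) : WithTop ℕ∞) := by
      exact_mod_cast Nat.one_le_iff_ne_zero.2 (Nat.succ_ne_zero m)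
    have hfd : DifferentiableOn ℝ f (univ ×ˢ U) := hf.differentiableOn (lt_of_lt_of_le zero_lt_one hm1).ne'
    set B₀ : (ℝ × E) →L[ℝ] ℝ × ℝ × E :=
      (0 : (ℝ × E) →L[ℝ] ℝ).prod ((0 : (ℝ × E) →L[ℝ] ℝ).prod (ContinuousLinearMap.snd ℝ ℝ E))
      with hB₀
    set B₁ : (ℝ × E) →L[ℝ] ℝ × ℝ × E :=
      (0 : (ℝ × E) →L[ℝ] ℝ).prod ((ContinuousLinearMap.fst ℝ ℝ E).prod
        (0 : (ℝ × E) →L[ℝ] E)) with hB₁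
    set B : ℝ → (ℝ × E) →L[ℝ] ℝ × ℝ × E := fun t => B₀ + t • B₁ with hBdef
    have hBapp : ∀ (t : ℝ) (v : ℝ × E), B t v = (0, t * v.1, v.2) := by
      intro t v
      simp [hBdef, hB₀, hB₁, Prod.ext_iff]
    have hBsmooth : ContDiff ℝ m (fun t : ℝ => B t) :=
      contDiff_const.add (contDiff_id.smul contDiff_const)
    have hBcont : Continuous (fun t : ℝ => B t) := hBsmooth.continuous
    have hBnorm : ∀ t ∈ Icc (0:ℝ) 1, ‖B t‖ ≤ ‖B₀‖ + ‖B₁‖ := by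
      intro t ht
      refine le_trans (norm_add_le _ _) ?_
      have : ‖t • B₁‖ ≤ ‖B₁‖ := by
        rw [norm_smul t B₁, Real.norm_eq_abs]
        exact mul_le_of_le_one_left (norm_nonneg _) (abs_le.2 ⟨by linarith [ht.1], ht.2⟩)
      linarith
    have hBform : ∀ t : ℝ, B t = (0 : (ℝ × E) →L[ℝ] ℝ).prod
        ((t • ContinuousLinearMap.fst ℝ ℝ E).prod (ContinuousLinearMap.snd ℝ ℝ E)) := by
      intro t
      apply ContinuousLinearMap.ext
      intro v
      simp [hBdef, hB₀, hB₁, Prod.ext_iff]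
    have hdfc : ContinuousOn (fderiv ℝ f) (univ ×ˢ U) :=
      hf.continuousOn_fderiv_of_isOpen hU' hm1
    -- the candidate derivative of the parametric integral
    have hderiv : ∀ p₀ ∈ U,
        HasFDerivAt (fun p : ℝ × E => ∫ t in (0:ℝ)..1, f (t, t * p.1, p.2))
          (∫ t in (0:ℝ)..1, (fderiv ℝ f (t, t * p₀.1, p₀.2)).comp (B t)) p₀ := by
      intro p₀ hp₀
      obtain ⟨ε, hε, hball⟩ := Metric.isOpen_iff.1 hU p₀ hp₀
      set r := ε / 2 with hr
      have hrpos : 0 < r := by positivity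
      have hrε : r < ε := by rw [hr]; linarith
      have hcb : Metric.closedBall p₀ r ⊆ U := fun x hx =>
        hball (lt_of_le_of_lt hx hrε)
      set c : ℝ × (ℝ × E) → ℝ × ℝ × E := fun q => (q.1, q.1 * q.2.1, q.2.2) with hc
      have hcont_c : Continuous c := by fun_prop
      set K : Set (ℝ × ℝ × E) := c '' (Icc (0:ℝ) 1 ×ˢ Metric.closedBall p₀ r) with hK
      have hKcomp : IsCompact K :=
        (isCompact_Icc.prod (isCompact_closedBall p₀ r)).image hcont_c
      have hKsub : K ⊆ univ ×ˢ U := by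
        rintro _ ⟨⟨t, p⟩, ⟨ht, hp⟩, rfl⟩
        exact ⟨mem_univ _, hstar p (hcb hp) t ht⟩
      have hmemK : ∀ (t : ℝ), t ∈ Icc (0:ℝ) 1 → ∀ (q : ℝ × E),
          q ∈ Metric.closedBall p₀ r → ((t, t * q.1, q.2) : ℝ × ℝ × E) ∈ K := by
        intro t ht q hq
        exact ⟨(t, q), mem_prod.2 ⟨ht, hq⟩, rfl⟩
      obtain ⟨C, hC⟩ := hKcomp.exists_bound_of_continuousOn (hdfc.mono hKsub)
      have hC0 : 0 ≤ C :=
        le_trans (norm_nonneg _) (hC _ (hmemK 0 (by norm_num : (0:ℝ) ∈ Icc (0:ℝ) 1) p₀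
          (Metric.mem_closedBall_self hrpos.le)))
      have hcont : ∀ q ∈ Metric.closedBall p₀ r,
          ContinuousOn (fun t => f (t, t * q.1, q.2)) (Icc (0:ℝ) 1) := by
        intro q hq
        have h1 : ContinuousOn (fun t : ℝ => ((t, q) : ℝ × (ℝ × E))) (Icc (0:ℝ) 1) := by
          fun_prop
        apply (hf.continuousOn.mono hKsub).comp (hcont_c.comp_continuousOn h1)
        intro t ht
        exact hmemK t ht q hq
      have hint : ∀ q ∈ Metric.closedBall p₀ r,
          IntervalIntegrable (fun t => f (t, t * q.1, q.2)) volume 0 1 := by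
        intro q hq
        apply ContinuousOn.intervalIntegrable
        rw [uIcc_of_le (by norm_num : (0:ℝ) ≤ 1)]
        exact hcont q hq
      have hιsub : Set.uIoc (0:ℝ) 1 ⊆ Icc (0:ℝ) 1 := by
        rw [uIoc_of_le (by norm_num : (0:ℝ) ≤ 1)]
        exact Ioc_subset_Icc_self
      have hf'cont : ContinuousOn
          (fun t : ℝ => (fderiv ℝ f (t, t * p₀.1, p₀.2)).comp (B t)) (Icc (0:ℝ) 1) := by
        have h1 : ContinuousOn (fun t : ℝ => fderiv ℝ f (t, t * p₀.1, p₀.2)) (Icc (0:ℝ) 1) := by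
          apply (hdfc.mono hKsub).comp (by fun_prop : Continuous
            (fun t : ℝ => ((t, t * p₀.1, p₀.2) : ℝ × ℝ × E))).continuousOn
          intro t ht
          exact hmemK t ht p₀ (Metric.mem_closedBall_self hrpos.le)
        exact h1.clm_comp hBcont.continuousOn
      have := intervalIntegral.hasFDerivAt_integral_of_dominated_of_fderiv_le
        (F := fun (x : ℝ × E) (t : ℝ) => f (t, t * x.1, x.2))
        (F' := fun (x : ℝ × E) (t : ℝ) => (fderiv ℝ f (t, t * x.1, x.2)).comp (B t))
        (x₀ := p₀) (a := (0:ℝ)) (b := 1) (μ := volume)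
        (bound := fun _ => C * (‖B₀‖ + ‖B₁‖)) (Metric.ball_mem_nhds p₀ hrpos) ?_ ?_ ?_ ?_ ?_ ?_
      · exact this
      · -- hF_meas
        filter_upwards [Metric.ball_mem_nhds p₀ hrpos] with x hx
        exact ((hcont x (Metric.ball_subset_closedBall hx)).mono hιsub).aestronglyMeasurable
          measurableSet_uIoc
      · exact hint p₀ (Metric.mem_closedBall_self hrpos.le)
      · haveI : SecondCountableTopologyEither ℝ ((ℝ × E) →L[ℝ] F) := ⟨Or.inl inferInstance⟩
        exact (hf'cont.mono hιsub).aestronglyMeasurable measurableSet_uIoc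
      · -- bound
        apply ae_of_all
        intro t ht x hx
        have ht' : t ∈ Icc (0:ℝ) 1 := hιsub ht
        have h1 : ‖fderiv ℝ f (t, t * x.1, x.2)‖ ≤ C :=
          hC _ (hmemK t ht' x (Metric.ball_subset_closedBall hx))
        calc ‖(fderiv ℝ f (t, t * x.1, x.2)).comp (B t)‖
            ≤ ‖fderiv ℝ f (t, t * x.1, x.2)‖ * ‖B t‖ := ContinuousLinearMap.opNorm_comp_le _ _
          _ ≤ C * (‖B₀‖ + ‖B₁‖) := mul_le_mul h1 (hBnorm t ht') (norm_nonneg _) hC0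
      · exact intervalIntegrable_const
      · -- differentiability
        apply ae_of_all
        intro t ht x hx
        have ht' : t ∈ Icc (0:ℝ) 1 := hιsub ht
        have hq : ((t, t * x.1, x.2) : ℝ × ℝ × E) ∈ univ ×ˢ U :=
          hKsub (hmemK t ht' x (Metric.ball_subset_closedBall hx))
        have hfq : HasFDerivAt f (fderiv ℝ f (t, t * x.1, x.2)) (t, t * x.1, x.2) :=
          ((hfd _ hq).differentiableAt (hU'.mem_nhds hq)).hasFDerivAt
        have hinner : HasFDerivAt (fun y : ℝ × E => ((t, t * y.1, y.2) : ℝ × ℝ × E)) (B t) x := by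
          rw [hBform t]
          exact (hasFDerivAt_const t x).prodMk ((hasFDerivAt_fst.const_mul t).prodMk hasFDerivAt_snd)
        simpa [Function.comp_def] using hfq.comp x hinner
    -- assemble
    have hcast : ((m + 1 : ℕ) : WithTop ℕ∞) = (m : WithTop ℕ∞) + 1 := by push_cast; rfl
    rw [hcast, contDiffOn_succ_iff_fderiv_of_isOpen hU]
    refine ⟨fun p hp => (hderiv p hp).differentiableAt.differentiableWithinAt,
      by simp, ?_⟩
    have hg : ContDiffOn ℝ m (fun q : ℝ × ℝ × E => (fderiv ℝ f q).comp (B q.1))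
        (univ ×ˢ U) := by
      have h1 : ContDiffOn ℝ m (fderiv ℝ f) (univ ×ˢ U) :=
        hf.fderiv_of_isOpen hU' (le_of_eq hcast.symm)
      have h2 : ContDiffOn ℝ m (fun q : ℝ × ℝ × E => B q.1) (univ ×ˢ U) :=
        (hBsmooth.comp contDiff_fst).contDiffOn
      exact (isBoundedBilinearMap_comp (𝕜 := ℝ) (E := ℝ × E) (F := ℝ × ℝ × E) (G := F)).contDiff.comp_contDiffOn (h1.prodMk h2)
    have hJ := ih hU hstar hg
    exact hJ.congr (fun p hp => (hderiv p hp).fderiv)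



/-- Hadamard's lemma for a parameter-dependent function vanishing at time 0. -/
theorem hadamard {F : Type} [NormedAddCommGroup F] [NormedSpace ℝ F] [CompleteSpace F]
    {U : Set (ℝ × E)} (hU : IsOpen U)
    (hstar : ∀ p ∈ U, ∀ t ∈ Icc (0:ℝ) 1, ((t * p.1, p.2) : ℝ × E) ∈ U)
    {G : ℝ × E → F} (m : ℕ) (hG : ContDiffOn ℝ (m + 1 : ℕ) G U)
    (hG0 : ∀ p ∈ U, p.1 = 0 → G p = 0) :
    ContDiffOn ℝ m
      (fun p : ℝ × E => if p.1 = 0 then fderiv ℝ G p ((1:ℝ), (0:E)) else p.1⁻¹ • G p) U := by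
  have hm1 : (1 : WithTop ℕ∞) ≤ ((m + 1 : ℕ) : WithTop ℕ∞) := by
    exact_mod_cast Nat.one_le_iff_ne_zero.2 (Nat.succ_ne_zero m)
  have hGd : DifferentiableOn ℝ G U := hG.differentiableOn (lt_of_lt_of_le zero_lt_one hm1).ne'
  have hdGc : ContinuousOn (fderiv ℝ G) U := hG.continuousOn_fderiv_of_isOpen hU hm1
  have hcast : ((m + 1 : ℕ) : WithTop ℕ∞) = (m : WithTop ℕ∞) + 1 := by push_cast; rfl
  have hfcd : ContDiffOn ℝ m
      (fun q : ℝ × ℝ × E => fderiv ℝ G q.2 ((1:ℝ), (0:E))) (univ ×ˢ U) := by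
    have hd : ContDiffOn ℝ m (fderiv ℝ G) U := hG.fderiv_of_isOpen hU (le_of_eq hcast.symm)
    have h1 : ContDiffOn ℝ m (fun q : ℝ × ℝ × E => fderiv ℝ G q.2) (univ ×ˢ U) :=
      hd.comp contDiff_snd.contDiffOn (fun q hq => hq.2)
    exact h1.clm_apply contDiffOn_const
  have hI := paramInt_s10 m hU hstar hfcd
  apply hI.congr
  rintro ⟨h, w⟩ hp
  have hsub : ∀ t ∈ uIcc (0:ℝ) 1, ((t * h, w) : ℝ × E) ∈ U := fun t ht =>
    hstar (h, w) hp t (by rwa [uIcc_of_le (by norm_num : (0:ℝ) ≤ 1)] at ht)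
  by_cases h0 : h = 0
  · subst h0
    simp only [if_pos]
    have : ∀ t : ℝ, ((t * (0:ℝ), w) : ℝ × E) = ((0:ℝ), w) := by intro t; simp
    simp only [mul_zero]
    rw [intervalIntegral.integral_const]
    simp
  · rw [if_neg h0]
    have hφ : ∀ t ∈ uIcc (0:ℝ) 1, HasDerivAt (fun s : ℝ => G (s * h, w))
        (fderiv ℝ G (t * h, w) ((h:ℝ), (0:E))) t := by
      intro t ht
      have hc : HasDerivAt (fun s : ℝ => ((s * h, w) : ℝ × E)) (((h:ℝ), (0:E)) : ℝ × E) t :=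
        (hasDerivAt_mul_const h).prodMk (hasDerivAt_const t w)
      have hGat : HasFDerivAt G (fderiv ℝ G (t * h, w)) (t * h, w) :=
        ((hGd _ (hsub t ht)).differentiableAt (hU.mem_nhds (hsub t ht))).hasFDerivAt
      exact hGat.comp_hasDerivAt t hc
    have hIcont : IntervalIntegrable
        (fun t => fderiv ℝ G (t * h, w) ((h:ℝ), (0:E))) volume 0 1 := by
      apply ContinuousOn.intervalIntegrable
      apply ContinuousOn.clm_apply _ continuousOn_const
      exact hdGc.comp (by fun_prop : Continuous fun t : ℝ => ((t * h, w) : ℝ × E)).continuousOn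
        hsub
    have hFTC := intervalIntegral.integral_eq_sub_of_hasDerivAt hφ hIcont
    have hsmul : (fun t => fderiv ℝ G (t * h, w) ((h:ℝ), (0:E)))
        = fun t => h • fderiv ℝ G (t * h, w) ((1:ℝ), (0:E)) := by
      funext t
      rw [← ContinuousLinearMap.map_smul]
      congr 1
      simp [Prod.ext_iff]
    rw [hsmul, intervalIntegral.integral_smul] at hFTC
    have hz : G ((0:ℝ) * h, w) = 0 := by
      apply hG0 _ (hsub 0 (by simp : (0:ℝ) ∈ uIcc (0:ℝ) 1))
      simp
    rw [hz, one_mul, sub_zero] at hFTC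
    rw [← hFTC, smul_smul, inv_mul_cancel₀ h0, one_smul]

end PI


/-- Blow-up of the joining constraint: the constraint set C is a C^k submanifold
and the blown-up constraint map φ̂ is C^{k-1} on it. -/
theorem stmt10 {n k : ℕ} (hk : 2 ≤ k) (D : TBDisc n k) :
    ∃ A : Set (ℝ × Phase n), IsOpen A ∧ (∀ w : Phase n, ((0:ℝ), w) ∈ A) ∧
      A ⊆ D.bdom ∧
      (∀ p ∈ A, Function.Surjective ⇑(fderiv ℝ (D.bp p.1) p.2) ∧
                Function.Surjective ⇑(fderiv ℝ (D.bm p.1) p.2)) ∧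
      -- C is a C^k submanifold: locally the zero set of a C^k submersion
      (∀ p ∈ {x : ℝ × Phase n × Phase n |
          (x.1, x.2.1) ∈ A ∧ (x.1, x.2.2) ∈ A ∧ D.bp x.1 x.2.1 = D.bm x.1 x.2.2},
        ∃ O : Set (ℝ × Phase n × Phase n), IsOpen O ∧ p ∈ O ∧
          ∃ Φc : ℝ × Phase n × Phase n → Vec n,
            ContDiffOn ℝ k Φc O ∧ Function.Surjective ⇑(fderiv ℝ Φc p) ∧
            {x : ℝ × Phase n × Phase n |
                (x.1, x.2.1) ∈ A ∧ (x.1, x.2.2) ∈ A ∧ D.bp x.1 x.2.1 = D.bm x.1 x.2.2}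
              ∩ O = {x ∈ O | Φc x = 0}) ∧
      -- φ̂ is C^{k-1} on C
      ContDiffOn ℝ (k - 1)
        (fun x : ℝ × Phase n × Phase n =>
          if x.1 = 0 then (2:ℝ)⁻¹ • (x.2.1.2 + x.2.2.2)
          else (2 * x.1)⁻¹ • (D.bp x.1 x.2.2 - D.bm x.1 x.2.1))
        {x : ℝ × Phase n × Phase n |
          (x.1, x.2.1) ∈ A ∧ (x.1, x.2.2) ∈ A ∧ D.bp x.1 x.2.1 = D.bm x.1 x.2.2} := by
  classical
  have hk1 : (1 : WithTop ℕ∞) ≤ (k : WithTop ℕ∞) := by exact_mod_cast (by omega : 1 ≤ k)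
  have h0mem : (0:ℝ) ∈ Ico (0:ℝ) D.a := ⟨le_refl _, D.a_pos⟩
  have hαp0 : D.αp 0 = 0 := by
    have h1 := D.α_sub 0 h0mem
    have h2 := D.αp_nonneg 0 h0mem
    have h3 := D.αm_nonpos 0 h0mem
    linarith
  have hαm0 : D.αm 0 = 0 := by
    have h1 := D.α_sub 0 h0mem
    linarith [hαp0]
  have hαdot : D.αpdot - D.αmdot = 1 := by
    have hu : UniqueDiffWithinAt ℝ (Ico (0:ℝ) D.a) 0 := uniqueDiffOn_Ico 0 D.a 0 h0mem
    have h1 : HasDerivWithinAt (fun h => D.αp h - D.αm h) (D.αpdot - D.αmdot)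
        (Ico (0:ℝ) D.a) 0 := D.αp_deriv.sub D.αm_deriv
    have h2 : HasDerivWithinAt (fun h : ℝ => h) (D.αpdot - D.αmdot) (Ico (0:ℝ) D.a) 0 :=
      h1.congr (fun y hy => (D.α_sub y hy).symm) (by simpa using (D.α_sub 0 h0mem).symm)
    have h3 : HasDerivWithinAt (fun h : ℝ => h) 1 (Ico (0:ℝ) D.a) 0 := hasDerivWithinAt_id 0 _
    exact (h2.derivWithin hu).symm.trans (h3.derivWithin hu)
  set Bp : ℝ × Phase n → Vec n := fun p => D.bp p.1 p.2 with hBpdef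
  set Bm : ℝ × Phase n → Vec n := fun p => D.bm p.1 p.2 with hBmdef
  have hBp : ContDiffOn ℝ k Bp D.bdom := D.bp_smooth
  have hBm : ContDiffOn ℝ k Bm D.bdom := D.bm_smooth
  have hBp0 : ∀ w : Phase n, Bp (0, w) = w.1 := by
    intro w
    show D.ψ 0 (D.αp 0) w = w.1
    rw [hαp0]
    exact D.ψ_init 0 w (D.dom_zero w)
  have hBm0 : ∀ w : Phase n, Bm (0, w) = w.1 := by
    intro w
    show D.ψ 0 (D.αm 0) w = w.1
    rw [hαm0]
    exact D.ψ_init 0 w (D.dom_zero w)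
  set G : ℝ × Phase n → Vec n := fun p => Bp p - Bm p with hGdef
  have hG : ContDiffOn ℝ k G D.bdom := hBp.sub hBm
  have hGd1 : DifferentiableOn ℝ G D.bdom := hG.differentiableOn (lt_of_lt_of_le zero_lt_one hk1).ne'
  have hGder : ∀ w : Phase n, fderiv ℝ G ((0:ℝ), w) ((1:ℝ), (0:Phase n)) = w.2 := by
    intro w
    have hmem := D.bdom_zero w
    have hdiff : DifferentiableAt ℝ G ((0:ℝ), w) :=
      (hGd1 _ hmem).differentiableAt (D.bdom_open.mem_nhds hmem)
    have hc : HasDerivAt (fun h : ℝ => ((h, w) : ℝ × Phase n)) (((1:ℝ), (0:Phase n))) 0 :=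
      (hasDerivAt_id (0:ℝ)).prodMk (hasDerivAt_const 0 w)
    have h1 : HasDerivAt (fun h : ℝ => G (h, w))
        (fderiv ℝ G ((0:ℝ), w) ((1:ℝ), (0:Phase n))) 0 :=
      by have := hdiff.hasFDerivAt.comp_hasDerivAt (0:ℝ) hc; exact this
    have h2 : HasDerivWithinAt (fun h : ℝ => G (h, w)) w.2 (Ici (0:ℝ)) 0 := by
      have h3 := (D.bp_deriv w).sub (D.bm_deriv w)
      have h4 : D.αpdot • w.2 - D.αmdot • w.2 = w.2 := by
        rw [← sub_smul, hαdot, one_smul]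
      rw [h4] at h3
      exact h3
    have hu : UniqueDiffWithinAt ℝ (Ici (0:ℝ)) 0 := uniqueDiffOn_Ici 0 0 self_mem_Ici
    exact ((h1.hasDerivWithinAt.derivWithin hu).symm.trans (h2.derivWithin hu))
  -- the star-shaped open set U
  set U : Set (ℝ × Phase n) :=
    {p | ∀ t ∈ Icc (0:ℝ) 1, ((t * p.1, p.2) : ℝ × Phase n) ∈ D.bdom} with hUdef
  have hUopen : IsOpen U := by
    rw [isOpen_iff_mem_nhds]
    intro p hp
    have hVopen : IsOpen {q : ℝ × (ℝ × Phase n) |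
        ((q.1 * q.2.1, q.2.2) : ℝ × Phase n) ∈ D.bdom} :=
      D.bdom_open.preimage (by fun_prop)
    have hsub : Icc (0:ℝ) 1 ×ˢ ({p} : Set (ℝ × Phase n)) ⊆
        {q : ℝ × (ℝ × Phase n) | ((q.1 * q.2.1, q.2.2) : ℝ × Phase n) ∈ D.bdom} := by
      rintro ⟨t, q⟩ ⟨ht, hq⟩
      rw [mem_singleton_iff] at hq
      subst hq
      exact hp t ht
    obtain ⟨u, v, hu, hv, hIu, hpv, huv⟩ :=
      generalized_tube_lemma isCompact_Icc isCompact_singleton hVopen hsub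
    apply Filter.mem_of_superset (hv.mem_nhds (hpv rfl))
    intro q hq t ht
    exact huv (mk_mem_prod (hIu ht) hq)
  have hUzero : ∀ w : Phase n, ((0:ℝ), w) ∈ U := by
    intro w t ht
    simpa using D.bdom_zero w
  have hUsub : U ⊆ D.bdom := by
    intro p hp
    have := hp 1 ⟨zero_le_one, le_refl 1⟩
    simpa using this
  have hUstar : ∀ p ∈ U, ∀ t ∈ Icc (0:ℝ) 1, ((t * p.1, p.2) : ℝ × Phase n) ∈ U := by
    intro p hp t ht s hs
    have hst : s * t ∈ Icc (0:ℝ) 1 := by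
      constructor
      · exact mul_nonneg hs.1 ht.1
      · nlinarith [hs.1, hs.2, ht.1, ht.2]
    have := hp (s * t) hst
    simpa [mul_assoc] using this
  -- boundary derivatives
  set inrP := ContinuousLinearMap.inr ℝ ℝ (Phase n) with hinr
  set inlV := ContinuousLinearMap.inl ℝ (Vec n) (Vec n) with hinl
  set Tp : ℝ × Phase n → (Phase n →L[ℝ] Vec n) := fun p => (fderiv ℝ Bp p).comp inrP
    with hTpdef
  set Tm : ℝ × Phase n → (Phase n →L[ℝ] Vec n) := fun p => (fderiv ℝ Bm p).comp inrP
    with hTmdef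
  set Mp : ℝ × Phase n → (Vec n →L[ℝ] Vec n) := fun p => (Tp p).comp inlV with hMpdef
  set Mm : ℝ × Phase n → (Vec n →L[ℝ] Vec n) := fun p => (Tm p).comp inlV with hMmdef
  have hTp : ∀ p ∈ D.bdom, HasFDerivAt (D.bp p.1) (Tp p) p.2 := by
    rintro ⟨h, w⟩ hp
    have hBpAt : HasFDerivAt Bp (fderiv ℝ Bp (h, w)) (h, w) :=
      ((hBp.differentiableOn (lt_of_lt_of_le zero_lt_one hk1).ne' _ hp).differentiableAt (D.bdom_open.mem_nhds hp)).hasFDerivAt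
    have hin : HasFDerivAt (fun w' : Phase n => ((h, w') : ℝ × Phase n)) inrP w :=
      hasFDerivAt_prodMk_right h w
    exact hBpAt.comp w hin
  have hTm : ∀ p ∈ D.bdom, HasFDerivAt (D.bm p.1) (Tm p) p.2 := by
    rintro ⟨h, w⟩ hp
    have hBmAt : HasFDerivAt Bm (fderiv ℝ Bm (h, w)) (h, w) :=
      ((hBm.differentiableOn (lt_of_lt_of_le zero_lt_one hk1).ne' _ hp).differentiableAt (D.bdom_open.mem_nhds hp)).hasFDerivAt
    have hin : HasFDerivAt (fun w' : Phase n => ((h, w') : ℝ × Phase n)) inrP w :=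
      hasFDerivAt_prodMk_right h w
    exact hBmAt.comp w hin
  have hMpc : ContinuousOn Mp D.bdom :=
    ((hBp.continuousOn_fderiv_of_isOpen D.bdom_open hk1).clm_comp
      continuousOn_const).clm_comp continuousOn_const
  have hMmc : ContinuousOn Mm D.bdom :=
    ((hBm.continuousOn_fderiv_of_isOpen D.bdom_open hk1).clm_comp
      continuousOn_const).clm_comp continuousOn_const
  have hMp0 : ∀ w : Phase n, Mp ((0:ℝ), w) = ContinuousLinearMap.id ℝ (Vec n) := by
    intro w
    have h1 : fderiv ℝ (D.bp 0) w = Tp ((0:ℝ), w) := (hTp ((0:ℝ), w) (D.bdom_zero w)).fderiv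
    have h2 : fderiv ℝ (D.bp 0) w = ContinuousLinearMap.fst ℝ (Vec n) (Vec n) := by
      have hfun : D.bp 0 = (Prod.fst : Phase n → Vec n) := funext fun w' => hBp0 w'
      rw [hfun]
      exact fderiv_fst
    have h3 : Tp ((0:ℝ), w) = ContinuousLinearMap.fst ℝ (Vec n) (Vec n) := h1.symm.trans h2
    show (Tp ((0:ℝ), w)).comp inlV = _
    rw [h3]
    ext v
    rfl
  have hMm0 : ∀ w : Phase n, Mm ((0:ℝ), w) = ContinuousLinearMap.id ℝ (Vec n) := by
    intro w
    have h1 : fderiv ℝ (D.bm 0) w = Tm ((0:ℝ), w) := (hTm ((0:ℝ), w) (D.bdom_zero w)).fderiv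
    have h2 : fderiv ℝ (D.bm 0) w = ContinuousLinearMap.fst ℝ (Vec n) (Vec n) := by
      have hfun : D.bm 0 = (Prod.fst : Phase n → Vec n) := funext fun w' => hBm0 w'
      rw [hfun]
      exact fderiv_fst
    have h3 : Tm ((0:ℝ), w) = ContinuousLinearMap.fst ℝ (Vec n) (Vec n) := h1.symm.trans h2
    show (Tm ((0:ℝ), w)).comp inlV = _
    rw [h3]
    ext v
    rfl
  -- the open set A
  set A : Set (ℝ × Phase n) := U ∩
      ((D.bdom ∩ Mp ⁻¹' {L : Vec n →L[ℝ] Vec n | IsUnit L}) ∩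
       (D.bdom ∩ Mm ⁻¹' {L : Vec n →L[ℝ] Vec n | IsUnit L})) with hAdef
  have hAopen : IsOpen A :=
    hUopen.inter ((hMpc.isOpen_inter_preimage D.bdom_open Units.isOpen).inter
      (hMmc.isOpen_inter_preimage D.bdom_open Units.isOpen))
  have hAzero : ∀ w : Phase n, ((0:ℝ), w) ∈ A := by
    intro w
    refine ⟨hUzero w, ⟨D.bdom_zero w, ?_⟩, ⟨D.bdom_zero w, ?_⟩⟩
    · show IsUnit (Mp ((0:ℝ), w))
      rw [hMp0 w, ← ContinuousLinearMap.one_def]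
      exact isUnit_one
    · show IsUnit (Mm ((0:ℝ), w))
      rw [hMm0 w, ← ContinuousLinearMap.one_def]
      exact isUnit_one
  have hAsubU : A ⊆ U := inter_subset_left
  have hAsub : A ⊆ D.bdom := fun p hp => hp.2.1.1
  have hsurjT : ∀ T : Phase n →L[ℝ] Vec n, IsUnit (T.comp inlV) →
      Function.Surjective ⇑T := by
    intro T hT y
    obtain ⟨u, hu⟩ := hT
    refine ⟨inlV ((↑u⁻¹ : Vec n →L[ℝ] Vec n) y), ?_⟩
    have h5 : T (inlV ((↑u⁻¹ : Vec n →L[ℝ] Vec n) y))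
        = (T.comp inlV) ((↑u⁻¹ : Vec n →L[ℝ] Vec n) y) := rfl
    rw [h5, ← hu, ← ContinuousLinearMap.mul_apply, Units.mul_inv,
      ContinuousLinearMap.one_apply]
  refine ⟨A, hAopen, hAzero, hAsub, ?_, ?_, ?_⟩
  · -- surjectivity of the boundary derivatives on A
    intro p hp
    constructor
    · rw [(hTp p (hAsub hp)).fderiv]
      exact hsurjT _ hp.2.1.2
    · rw [(hTm p (hAsub hp)).fderiv]
      exact hsurjT _ hp.2.2.2
  · -- C is locally the zero set of a C^k submersion
    rintro p ⟨hp1, hp2, hp3⟩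
    have hq1 : ((p.1, p.2.1) : ℝ × Phase n) ∈ D.bdom := hAsub hp1
    have hq2 : ((p.1, p.2.2) : ℝ × Phase n) ∈ D.bdom := hAsub hp2
    refine ⟨{x : ℝ × Phase n × Phase n | (x.1, x.2.1) ∈ A ∧ (x.1, x.2.2) ∈ A},
      ?_, ⟨hp1, hp2⟩, fun x => Bp (x.1, x.2.1) - Bm (x.1, x.2.2), ?_, ?_, ?_⟩
    · exact (hAopen.preimage (by fun_prop)).inter (hAopen.preimage (by fun_prop))
    · -- smoothness of Φc
      have hπ1 : ContDiff ℝ k (fun x : ℝ × Phase n × Phase n => ((x.1, x.2.1) : ℝ × Phase n)) :=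
        contDiff_fst.prodMk (contDiff_fst.comp contDiff_snd)
      have hπ2 : ContDiff ℝ k (fun x : ℝ × Phase n × Phase n => ((x.1, x.2.2) : ℝ × Phase n)) :=
        contDiff_fst.prodMk (contDiff_snd.comp contDiff_snd)
      exact (hBp.comp hπ1.contDiffOn fun x hx => hAsub hx.1).sub
        (hBm.comp hπ2.contDiffOn fun x hx => hAsub hx.2)
    · -- surjectivity of the full derivative
      set Q1 : (ℝ × Phase n × Phase n) →L[ℝ] ℝ × Phase n :=
        (ContinuousLinearMap.fst ℝ ℝ (Phase n × Phase n)).prod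
          ((ContinuousLinearMap.fst ℝ (Phase n) (Phase n)).comp
            (ContinuousLinearMap.snd ℝ ℝ (Phase n × Phase n))) with hQ1def
      set Q2 : (ℝ × Phase n × Phase n) →L[ℝ] ℝ × Phase n :=
        (ContinuousLinearMap.fst ℝ ℝ (Phase n × Phase n)).prod
          ((ContinuousLinearMap.snd ℝ (Phase n) (Phase n)).comp
            (ContinuousLinearMap.snd ℝ ℝ (Phase n × Phase n))) with hQ2def
      have hBpAt : HasFDerivAt Bp (fderiv ℝ Bp (p.1, p.2.1)) (p.1, p.2.1) :=
        ((hBp.differentiableOn (lt_of_lt_of_le zero_lt_one hk1).ne' _ hq1).differentiableAt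
          (D.bdom_open.mem_nhds hq1)).hasFDerivAt
      have hBmAt : HasFDerivAt Bm (fderiv ℝ Bm (p.1, p.2.2)) (p.1, p.2.2) :=
        ((hBm.differentiableOn (lt_of_lt_of_le zero_lt_one hk1).ne' _ hq2).differentiableAt
          (D.bdom_open.mem_nhds hq2)).hasFDerivAt
      have h1 : HasFDerivAt (fun x : ℝ × Phase n × Phase n => Bp (x.1, x.2.1))
          ((fderiv ℝ Bp (p.1, p.2.1)).comp Q1) p := by have := hBpAt.comp p Q1.hasFDerivAt; exact this
      have h2 : HasFDerivAt (fun x : ℝ × Phase n × Phase n => Bm (x.1, x.2.2))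
          ((fderiv ℝ Bm (p.1, p.2.2)).comp Q2) p := by have := hBmAt.comp p Q2.hasFDerivAt; exact this
      have hΦ : HasFDerivAt (fun x : ℝ × Phase n × Phase n => Bp (x.1, x.2.1) - Bm (x.1, x.2.2))
          ((fderiv ℝ Bp (p.1, p.2.1)).comp Q1 - (fderiv ℝ Bm (p.1, p.2.2)).comp Q2) p :=
        h1.sub h2
      rw [hΦ.fderiv]
      intro y
      obtain ⟨δv, hδv⟩ := hsurjT (Tp (p.1, p.2.1)) hp1.2.1.2 y
      refine ⟨((0:ℝ), δv, (0 : Phase n)), ?_⟩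
      rw [ContinuousLinearMap.sub_apply, ContinuousLinearMap.comp_apply,
        ContinuousLinearMap.comp_apply]
      have e1 : Q1 (((0:ℝ), δv, (0 : Phase n)) : ℝ × Phase n × Phase n) = ((0:ℝ), δv) := rfl
      have e2 : Q2 (((0:ℝ), δv, (0 : Phase n)) : ℝ × Phase n × Phase n)
          = (0 : ℝ × Phase n) := rfl
      rw [e1, e2, map_zero, sub_zero]
      exact hδv
    · -- the zero-set description
      ext x
      simp only [mem_inter_iff, mem_setOf_eq]
      constructor
      · rintro ⟨⟨hx1, hx2, hx3⟩, hxO⟩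
        exact ⟨hxO, sub_eq_zero.2 hx3⟩
      · rintro ⟨⟨hxa, hxb⟩, hxz⟩
        exact ⟨⟨hxa, hxb, sub_eq_zero.1 hxz⟩, hxa, hxb⟩
  · -- smoothness of the blown-up constraint map
    have hkk : k - 1 + 1 = k := by omega
    have hGU : ContDiffOn ℝ ((k - 1) + 1 : ℕ) G U := by
      rw [hkk]
      exact hG.mono hUsub
    have hG0 : ∀ p ∈ U, p.1 = 0 → G p = 0 := by
      rintro ⟨h, w⟩ hpU h0
      dsimp only at h0
      subst h0
      show Bp ((0:ℝ), w) - Bm ((0:ℝ), w) = 0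
      rw [hBp0, hBm0, sub_self]
    set H : ℝ × Phase n → Vec n :=
      fun p => if p.1 = 0 then fderiv ℝ G p ((1:ℝ), (0 : Phase n)) else p.1⁻¹ • G p with hHdef
    have hH : ContDiffOn ℝ (k - 1 : ℕ) H U := hadamard hUopen hUstar (k - 1) hGU hG0
    have hH0 : ∀ w : Phase n, H ((0:ℝ), w) = w.2 := by
      intro w
      show (if (0:ℝ) = 0 then fderiv ℝ G ((0:ℝ), w) ((1:ℝ), (0 : Phase n))
          else (0:ℝ)⁻¹ • G ((0:ℝ), w)) = w.2
      rw [if_pos rfl]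
      exact hGder w
    have hHne : ∀ (h : ℝ) (w : Phase n), h ≠ 0 →
        H (h, w) = h⁻¹ • (Bp (h, w) - Bm (h, w)) := by
      intro h w hne
      rw [hHdef]
      simp only [if_neg hne]
      rfl
    have hπ1 : ContDiff ℝ (k - 1 : ℕ)
        (fun x : ℝ × Phase n × Phase n => ((x.1, x.2.1) : ℝ × Phase n)) :=
      contDiff_fst.prodMk (contDiff_fst.comp contDiff_snd)
    have hπ2 : ContDiff ℝ (k - 1 : ℕ)
        (fun x : ℝ × Phase n × Phase n => ((x.1, x.2.2) : ℝ × Phase n)) :=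
      contDiff_fst.prodMk (contDiff_snd.comp contDiff_snd)
    have hF : ContDiffOn ℝ (k - 1 : ℕ)
        (fun x : ℝ × Phase n × Phase n => (2:ℝ)⁻¹ • (H (x.1, x.2.1) + H (x.1, x.2.2)))
        {x : ℝ × Phase n × Phase n | ((x.1, x.2.1) : ℝ × Phase n) ∈ U ∧
          ((x.1, x.2.2) : ℝ × Phase n) ∈ U} :=
      ((hH.comp hπ1.contDiffOn fun x hx => hx.1).add
        (hH.comp hπ2.contDiffOn fun x hx => hx.2)).const_smul _
    have hCsub : {x : ℝ × Phase n × Phase n |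
        (x.1, x.2.1) ∈ A ∧ (x.1, x.2.2) ∈ A ∧ D.bp x.1 x.2.1 = D.bm x.1 x.2.2} ⊆
        {x : ℝ × Phase n × Phase n | ((x.1, x.2.1) : ℝ × Phase n) ∈ U ∧
          ((x.1, x.2.2) : ℝ × Phase n) ∈ U} := by
      rintro x ⟨hx1, hx2, _⟩
      exact ⟨hAsubU hx1, hAsubU hx2⟩
    apply ContDiffOn.congr (hF.mono hCsub)
    rintro ⟨h, v, vt⟩ ⟨hx1, hx2, hx3⟩
    have hc : Bp (h, v) = Bm (h, vt) := hx3
    by_cases h0 : h = 0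
    · subst h0
      dsimp only
      rw [if_pos rfl, hH0 v, hH0 vt]
    · dsimp only
      rw [if_neg h0, hHne h v h0, hHne h vt h0]
      have hbp : ∀ (a : ℝ) (b : Phase n), D.bp a b = Bp (a, b) := fun _ _ => rfl
      have hbm : ∀ (a : ℝ) (b : Phase n), D.bm a b = Bm (a, b) := fun _ _ => rfl
      rw [hbp, hbm, mul_inv, ← smul_smul, ← smul_add]
      congr 1
      congr 1
      rw [hc]
      abel



end
end

section
/- Let g, V : ℝ → ℝ be C^∞ with g > 0, let a ∈ ℝ, and set L(q, v) := g(q)v²/2 − V(q). For (h, q̄, z, v) ∈ ℝ⁴ set q := q̄ − hz/2 and f(h, q̄, z, v) := (∂L/∂v)(q, v) − (∂L/∂v)(q + hv, z − v) + h·(∂L/∂q)(q + hv, z − v), which is the derivative in v of the desingularized discrete action L(q, v) + ahv + L(q + hv, z − v) + ah(z − v). Then for every (q̄₀, z₀) ∈ ℝ² there exist ε > 0 and a C^∞ map γ : (−ε, ε) × (q̄₀ − ε, q̄₀ + ε) × (z₀ − ε, z₀ + ε) → ℝ such that γ(0, q̄, z) = z/2, f(h, q̄, z, γ(h, q̄,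 z)) = 0 for all (h, q̄, z) in the domain, and γ(h, q̄, z) is the unique v with |v − z₀/2| < ε satisfying f(h, q̄, z, v) = 0. -/
open Set

noncomputable section

/-- The one-dimensional example Lagrangian L(q, v) = g(q)v²/2 − V(q). -/
def exL (g V : ℝ → ℝ) (q v : ℝ) : ℝ := g q * v ^ 2 / 2 - V q

/-- The derivative in v of the desingularized discrete action
L(q, v) + ahv + L(q + hv, z − v) + ah(z − v), where q = q̄ − hz/2. -/
def exf (g V : ℝ → ℝ) (h qb z v : ℝ) : ℝ :=
  deriv (fun u => exL g V (qb - h * z / 2) u) v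
    - deriv (fun u => exL g V (qb - h * z / 2 + h * v) u) (z - v)
    + h * deriv (fun x => exL g V x (z - v)) (qb - h * z / 2 + h * v)

/-- The function exf as an explicit smooth function of all four variables. -/
def exF (g V : ℝ → ℝ) (p : ℝ × ℝ × ℝ × ℝ) : ℝ :=
  g (p.2.1 - p.1 * p.2.2.1 * (1 / 2)) * p.2.2.2
    - g (p.2.1 - p.1 * p.2.2.1 * (1 / 2) + p.1 * p.2.2.2) * (p.2.2.1 - p.2.2.2)
    + p.1 * (deriv g (p.2.1 - p.1 * p.2.2.1 * (1 / 2) + p.1 * p.2.2.2)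
          * (p.2.2.1 - p.2.2.2) ^ 2 * (1 / 2)
        - deriv V (p.2.1 - p.1 * p.2.2.1 * (1 / 2) + p.1 * p.2.2.2))

theorem exL_deriv_v (g V : ℝ → ℝ) (q v : ℝ) :
    deriv (fun u => exL g V q u) v = g q * v := by
  have h : HasDerivAt (fun u : ℝ => g q * u ^ 2 / 2 - V q) (g q * v) v := by
    have h0 := (((hasDerivAt_pow 2 v).const_mul (g q)).div_const 2).sub_const (V q)
    refine h0.congr_deriv ?_
    push_cast; ring
  exact h.deriv

theorem exL_deriv_q (g V : ℝ → ℝ) (hg : Differentiable ℝ g) (hV : Differentiable ℝ V)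
    (w x₀ : ℝ) :
    deriv (fun x => exL g V x w) x₀ = deriv g x₀ * w ^ 2 / 2 - deriv V x₀ := by
  have h : HasDerivAt (fun x => exL g V x w) (deriv g x₀ * w ^ 2 / 2 - deriv V x₀) x₀ :=
    (((hg x₀).hasDerivAt.mul_const (w ^ 2)).div_const 2).sub (hV x₀).hasDerivAt
  exact h.deriv

theorem exf_eq (g V : ℝ → ℝ) (hg : Differentiable ℝ g) (hV : Differentiable ℝ V)
    (h qb z v : ℝ) : exf g V h qb z v = exF g V (h, qb, z, v) := by
  simp only [exf, exF, exL_deriv_v, exL_deriv_q g V hg hV]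
  have e : qb - h * z / 2 = qb - h * z * (1 / 2) := by ring
  rw [e]; ring

theorem exF_smooth (g V : ℝ → ℝ) (hg : ContDiff ℝ (⊤ : ℕ∞) g)
    (hV : ContDiff ℝ (⊤ : ℕ∞) V) : ContDiff ℝ (⊤ : ℕ∞) (exF g V) := by
  have hg' : ContDiff ℝ (⊤ : ℕ∞) (deriv g) := by
    exact_mod_cast (contDiff_infty_iff_deriv.mp (by exact_mod_cast hg)).2
  have hV' : ContDiff ℝ (⊤ : ℕ∞) (deriv V) := by
    exact_mod_cast (contDiff_infty_iff_deriv.mp (by exact_mod_cast hV)).2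
  unfold exF
  fun_prop

/-- The linear equivalence (x₁,x₂,x₃,x₄) ↦ (x₁,x₂,x₃,c₁x₁+c₂x₂+c₃x₃+dx₄) for d ≠ 0. -/
def mkE (c₁ c₂ c₃ d : ℝ) (hd : d ≠ 0) : (ℝ × ℝ × ℝ × ℝ) ≃L[ℝ] ℝ × ℝ × ℝ × ℝ :=
  LinearEquiv.toContinuousLinearEquiv
  { toFun := fun x => (x.1, x.2.1, x.2.2.1,
      c₁ * x.1 + c₂ * x.2.1 + c₃ * x.2.2.1 + d * x.2.2.2)
    map_add' := by intro x y; simp [Prod.ext_iff]; ring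
    map_smul' := by intro m x; simp [Prod.ext_iff]; ring
    invFun := fun y => (y.1, y.2.1, y.2.2.1,
      (y.2.2.2 - c₁ * y.1 - c₂ * y.2.1 - c₃ * y.2.2.1) / d)
    left_inv := by intro x; simp [Prod.ext_iff]; field_simp; ring
    right_inv := by intro y; simp [Prod.ext_iff]; field_simp; ring }

theorem mkE_apply (c₁ c₂ c₃ d : ℝ) (hd : d ≠ 0) (x : ℝ × ℝ × ℝ × ℝ) :
    mkE c₁ c₂ c₃ d hd x = (x.1, x.2.1, x.2.2.1,
      c₁ * x.1 + c₂ * x.2.1 + c₃ * x.2.2.1 + d * x.2.2.2) := rfl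

/-- Decomposition of a continuous linear functional on ℝ⁴. -/
theorem lin_decomp (φ : (ℝ × ℝ × ℝ × ℝ) →L[ℝ] ℝ) (x : ℝ × ℝ × ℝ × ℝ) :
    φ x = x.1 * φ (1, 0, 0, 0) + x.2.1 * φ (0, 1, 0, 0)
      + x.2.2.1 * φ (0, 0, 1, 0) + x.2.2.2 * φ (0, 0, 0, 1) := by
  have hx : x = x.1 • ((1:ℝ), (0:ℝ), (0:ℝ), (0:ℝ)) + x.2.1 • (0, 1, 0, 0)
      + x.2.2.1 • (0, 0, 1, 0) + x.2.2.2 • (0, 0, 0, 1) := by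
    simp [Prod.ext_iff]
  conv_lhs => rw [hx]
  simp only [map_add, map_smul, smul_eq_mul]

/-- The map Φ(x) = (x₁, x₂, x₃, F(x)) has an invertible derivative at any point where
∂₄F ≠ 0. -/
theorem hasFDerivAt_Phi (F : ℝ × ℝ × ℝ × ℝ → ℝ) (hF : ContDiff ℝ (⊤ : ℕ∞) F)
    (p : ℝ × ℝ × ℝ × ℝ) (hd : fderiv ℝ F p (0, 0, 0, 1) ≠ 0) :
    HasFDerivAt (fun x : ℝ × ℝ × ℝ × ℝ => (x.1, x.2.1, x.2.2.1, F x))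
      (mkE (fderiv ℝ F p (1, 0, 0, 0)) (fderiv ℝ F p (0, 1, 0, 0))
        (fderiv ℝ F p (0, 0, 1, 0)) (fderiv ℝ F p (0, 0, 0, 1)) hd
        : (ℝ × ℝ × ℝ × ℝ) →L[ℝ] ℝ × ℝ × ℝ × ℝ) p := by
  have h4 : HasFDerivAt F (fderiv ℝ F p) p :=
    ((hF.differentiable (by simp)) p).hasFDerivAt
  have base : HasFDerivAt (fun x : ℝ × ℝ × ℝ × ℝ => (x.1, x.2.1, x.2.2.1, F x))
      ((ContinuousLinearMap.fst ℝ ℝ (ℝ × ℝ × ℝ)).prod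
        (((ContinuousLinearMap.fst ℝ ℝ (ℝ × ℝ)).comp
            (ContinuousLinearMap.snd ℝ ℝ (ℝ × ℝ × ℝ))).prod
          (((ContinuousLinearMap.fst ℝ ℝ ℝ).comp
              ((ContinuousLinearMap.snd ℝ ℝ (ℝ × ℝ)).comp
                (ContinuousLinearMap.snd ℝ ℝ (ℝ × ℝ × ℝ)))).prod (fderiv ℝ F p)))) p :=
    ((ContinuousLinearMap.fst ℝ ℝ (ℝ × ℝ × ℝ)).hasFDerivAt).prodMk
      ((((ContinuousLinearMap.fst ℝ ℝ (ℝ × ℝ)).comp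
          (ContinuousLinearMap.snd ℝ ℝ (ℝ × ℝ × ℝ))).hasFDerivAt).prodMk
        ((((ContinuousLinearMap.fst ℝ ℝ ℝ).comp
            ((ContinuousLinearMap.snd ℝ ℝ (ℝ × ℝ)).comp
              (ContinuousLinearMap.snd ℝ ℝ (ℝ × ℝ × ℝ)))).hasFDerivAt).prodMk h4))
  convert base using 1
  apply ContinuousLinearMap.ext
  intro x
  simp [mkE_apply, Prod.ext_iff]
  rw [lin_decomp (fderiv ℝ F p) x]
  norm_num
  ring

/-- Discrete existence and uniqueness for the one-dimensional example: the
desingularized discrete variational principle has a unique, smoothly parametrized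
critical point near v = z/2 for small h. -/
theorem stmt12 (g V : ℝ → ℝ) (hg : ContDiff ℝ (⊤ : ℕ∞) g) (hV : ContDiff ℝ (⊤ : ℕ∞) V)
    (hgpos : ∀ q : ℝ, 0 < g q) (a : ℝ) :
    ∀ qb₀ z₀ : ℝ, ∃ ε > (0:ℝ), ∃ γ : ℝ → ℝ → ℝ → ℝ,
      ContDiffOn ℝ (⊤ : ℕ∞) (fun p : ℝ × ℝ × ℝ => γ p.1 p.2.1 p.2.2)
        (Ioo (-ε) ε ×ˢ Ioo (qb₀ - ε) (qb₀ + ε) ×ˢ Ioo (z₀ - ε) (z₀ + ε)) ∧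
      (∀ qb ∈ Ioo (qb₀ - ε) (qb₀ + ε), ∀ z ∈ Ioo (z₀ - ε) (z₀ + ε),
        γ 0 qb z = z / 2) ∧
      (∀ h ∈ Ioo (-ε) ε, ∀ qb ∈ Ioo (qb₀ - ε) (qb₀ + ε), ∀ z ∈ Ioo (z₀ - ε) (z₀ + ε),
        exf g V h qb z (γ h qb z) = 0 ∧
        ∀ v : ℝ, |v - z₀ / 2| < ε → exf g V h qb z v = 0 → v = γ h qb z) := by
  intro qb₀ z₀
  set F := exF g V with hFdef
  have hF : ContDiff ℝ (⊤ : ℕ∞) F := exF_smooth g V hg hV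
  have hgd : Differentiable ℝ g := hg.differentiable (by simp)
  have hVd : Differentiable ℝ V := hV.differentiable (by simp)
  have hFd : ∀ p, HasFDerivAt F (fderiv ℝ F p) p := fun p =>
    ((hF.differentiable (by simp)) p).hasFDerivAt
  set D : ℝ × ℝ × ℝ × ℝ → ℝ := fun p => fderiv ℝ F p (0, 0, 0, 1) with hDdef
  have hDcont : Continuous D :=
    (ContinuousLinearMap.apply ℝ ℝ ((0, 0, 0, 1) : ℝ × ℝ × ℝ × ℝ)).continuous.comp
      (hF.continuous_fderiv (by simp))
  set a₀ : ℝ × ℝ × ℝ × ℝ := (0, qb₀, z₀, z₀ / 2) with ha₀def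
  -- compute D a₀ = 2 g(qb₀)
  have hDa : D a₀ = 2 * g qb₀ := by
    have hline : HasDerivAt (fun v : ℝ => ((0:ℝ), qb₀, z₀, v))
        (((0:ℝ), (0:ℝ), (0:ℝ), (1:ℝ))) (z₀ / 2) :=
      (hasDerivAt_const _ _).prodMk ((hasDerivAt_const _ _).prodMk
        ((hasDerivAt_const _ _).prodMk (hasDerivAt_id _)))
    have hcomp : HasDerivAt (fun v : ℝ => F (0, qb₀, z₀, v)) (D a₀) (z₀ / 2) :=
      by have := (hFd a₀).comp_hasDerivAt _ hline; exact this
    have hexp : (fun v : ℝ => F (0, qb₀, z₀, v))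
        = fun v => g qb₀ * v - g qb₀ * (z₀ - v) := by
      funext v; simp [hFdef, exF]
    rw [hexp] at hcomp
    have h2 : HasDerivAt (fun v : ℝ => g qb₀ * v - g qb₀ * (z₀ - v)) (2 * g qb₀) (z₀ / 2) := by
      have := ((hasDerivAt_id (z₀ / 2)).const_mul (g qb₀)).sub
        (((hasDerivAt_id (z₀ / 2)).const_sub z₀).const_mul (g qb₀))
      refine this.congr_deriv ?_
      ring
    exact hcomp.unique h2
  have hDa0 : D a₀ ≠ 0 := by rw [hDa]; exact ne_of_gt (by linarith [hgpos qb₀])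
  -- the map Φ and its partial homeomorphism
  set Φ : ℝ × ℝ × ℝ × ℝ → ℝ × ℝ × ℝ × ℝ := fun x => (x.1, x.2.1, x.2.2.1, F x) with hΦdef
  have hΦ : ContDiff ℝ (⊤ : ℕ∞) Φ :=
    contDiff_fst.prodMk ((contDiff_fst.comp contDiff_snd).prodMk
      ((contDiff_fst.comp (contDiff_snd.comp contDiff_snd)).prodMk hF))
  set Φh : OpenPartialHomeomorph (ℝ × ℝ × ℝ × ℝ) (ℝ × ℝ × ℝ × ℝ) :=
    hΦ.contDiffAt.toOpenPartialHomeomorph Φ (hasFDerivAt_Phi F hF a₀ hDa0)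
      (by simp) with hΦhdef
  have hcoe : ⇑Φh = Φ := rfl
  have ha₀src : a₀ ∈ Φh.source :=
    ContDiffAt.mem_toOpenPartialHomeomorph_source hΦ.contDiffAt _ _
  have hFa₀ : F a₀ = 0 := by
    simp [hFdef, exF, ha₀def]
    ring
  have hΦa₀ : Φ a₀ = (0, qb₀, z₀, 0) := by
    simp [hΦdef, hFa₀]
    exact ⟨rfl, rfl, rfl⟩
  have ha₀tgt : ((0:ℝ), qb₀, z₀, (0:ℝ)) ∈ Φh.target := by
    rw [← hΦa₀]
    exact ContDiffAt.image_mem_toOpenPartialHomeomorph_target hΦ.contDiffAt _ _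
  -- the good target set
  set T : Set (ℝ × ℝ × ℝ × ℝ) := Φh.target ∩ Φh.symm ⁻¹' {x | D x ≠ 0} with hTdef
  have hTopen : IsOpen T :=
    Φh.continuousOn_symm.isOpen_inter_preimage Φh.open_target
      (isOpen_compl_singleton.preimage hDcont)
  have ha₀T : ((0:ℝ), qb₀, z₀, (0:ℝ)) ∈ T := by
    refine ⟨ha₀tgt, ?_⟩
    have : Φh.symm (0, qb₀, z₀, 0) = a₀ := by
      rw [← hΦa₀, ← hcoe]
      exact Φh.left_inv ha₀src
    simp only [mem_preimage, this, mem_setOf_eq]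
    exact hDa0
  obtain ⟨δ₁, hδ₁pos, hδ₁⟩ := Metric.isOpen_iff.mp Φh.open_source a₀ ha₀src
  obtain ⟨δ₂, hδ₂pos, hδ₂⟩ := Metric.isOpen_iff.mp hTopen _ ha₀T
  set ε := min δ₁ δ₂ with hεdef
  have hεpos : 0 < ε := lt_min hδ₁pos hδ₂pos
  have hεδ₁ : ε ≤ δ₁ := min_le_left _ _
  have hεδ₂ : ε ≤ δ₂ := min_le_right _ _
  -- membership helper
  have hball : ∀ (x y : ℝ × ℝ × ℝ × ℝ) (r : ℝ), |x.1 - y.1| < r → |x.2.1 - y.2.1| < r →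
      |x.2.2.1 - y.2.2.1| < r → |x.2.2.2 - y.2.2.2| < r → x ∈ Metric.ball y r := by
    intro x y r h1 h2 h3 h4
    simp only [Metric.mem_ball, Prod.dist_eq, Real.dist_eq, max_lt_iff]
    exact ⟨h1, h2, h3, h4⟩
  have hIoo : ∀ x c : ℝ, x ∈ Ioo (c - ε) (c + ε) → |x - c| < ε := by
    intro x c hx
    rw [abs_lt]
    exact ⟨by linarith [hx.1], by linarith [hx.2]⟩
  have hIoo0 : ∀ x : ℝ, x ∈ Ioo (-ε) ε → |x - 0| < ε := by
    intro x hx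
    rw [sub_zero, abs_lt]
    exact ⟨hx.1, hx.2⟩
  -- the implicit function
  set γ : ℝ → ℝ → ℝ → ℝ := fun h qb z => (Φh.symm (h, qb, z, 0)).2.2.2 with hγdef
  -- key structural fact
  have key : ∀ h qb z : ℝ, h ∈ Ioo (-ε) ε → qb ∈ Ioo (qb₀ - ε) (qb₀ + ε) →
      z ∈ Ioo (z₀ - ε) (z₀ + ε) →
      (h, qb, z, (0:ℝ)) ∈ Φh.target ∧ Φh.symm (h, qb, z, 0) = (h, qb, z, γ h qb z) ∧
        F (h, qb, z, γ h qb z) = 0 ∧ D (h, qb, z, γ h qb z) ≠ 0 := by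
    intro h qb z hh hqb hz
    have hyT : (h, qb, z, (0:ℝ)) ∈ T := by
      apply hδ₂
      apply Metric.ball_subset_ball hεδ₂
      apply hball
      · simpa using hIoo0 h hh
      · simpa using hIoo qb qb₀ hqb
      · simpa using hIoo z z₀ hz
      · simpa using hεpos
    have hytgt : (h, qb, z, (0:ℝ)) ∈ Φh.target := hyT.1
    have hrinv : Φ (Φh.symm (h, qb, z, 0)) = (h, qb, z, 0) := by
      rw [← hcoe]; exact Φh.right_inv hytgt
    set s := Φh.symm (h, qb, z, (0:ℝ)) with hsdef
    have hs1 : s.1 = h := congrArg Prod.fst hrinv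
    have hs2 : s.2.1 = qb := congrArg (fun w => w.2.1) hrinv
    have hs3 : s.2.2.1 = z := congrArg (fun w => w.2.2.1) hrinv
    have hs4 : F s = 0 := congrArg (fun w => w.2.2.2) hrinv
    have hseq : s = (h, qb, z, γ h qb z) := by
      rw [hγdef]
      exact Prod.ext hs1 (Prod.ext hs2 (Prod.ext hs3 rfl))
    refine ⟨hytgt, hseq, ?_, ?_⟩
    · rw [← hseq]; exact hs4
    · rw [← hseq]; exact hyT.2
  refine ⟨ε, hεpos, γ, ?_, ?_, ?_⟩
  · -- smoothness
    intro p hp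
    have hh := hp.1
    have hqb := hp.2.1
    have hz := hp.2.2
    have hk := key p.1 p.2.1 p.2.2 hh hqb hz
    have hytgt := hk.1
    have hDs : D (Φh.symm (p.1, p.2.1, p.2.2, 0)) ≠ 0 := by
      rw [hk.2.1]; exact hk.2.2.2
    have hsymm : ContDiffAt ℝ ((⊤ : ℕ∞) : WithTop ℕ∞) Φh.symm (p.1, p.2.1, p.2.2, 0) := by
      apply Φh.contDiffAt_symm hytgt
        (hasFDerivAt_Phi F hF (Φh.symm (p.1, p.2.1, p.2.2, 0)) hDs)
      exact hΦ.contDiffAt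
    have hj : ContDiffAt ℝ ((⊤ : ℕ∞) : WithTop ℕ∞)
        (fun w : ℝ × ℝ × ℝ => (w.1, w.2.1, w.2.2, (0:ℝ))) p :=
      (contDiff_fst.prodMk ((contDiff_fst.comp contDiff_snd).prodMk
        ((contDiff_snd.comp contDiff_snd).prodMk contDiff_const))).contDiffAt
    have hproj : ContDiffAt ℝ ((⊤ : ℕ∞) : WithTop ℕ∞)
        (fun w : ℝ × ℝ × ℝ × ℝ => w.2.2.2) (Φh.symm (p.1, p.2.1, p.2.2, 0)) :=
      (contDiff_snd.comp (contDiff_snd.comp contDiff_snd)).contDiffAt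
    exact ((by have := hproj.comp p (hsymm.comp p hj); exact this) :
      ContDiffAt ℝ _ (fun w : ℝ × ℝ × ℝ => γ w.1 w.2.1 w.2.2) p).contDiffWithinAt
  · -- γ 0 qb z = z/2
    intro qb hqb z hz
    have hxsrc : ((0:ℝ), qb, z, z / 2) ∈ Φh.source := by
      apply hδ₁
      apply Metric.ball_subset_ball hεδ₁
      apply hball
      · simpa [ha₀def] using hεpos
      · simpa [ha₀def] using hIoo qb qb₀ hqb
      · simpa [ha₀def] using hIoo z z₀ hz
      · have : |z / 2 - z₀ / 2| = |z - z₀| / 2 := by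
          rw [show z / 2 - z₀ / 2 = (z - z₀) / 2 by ring, abs_div]
          norm_num
        simp only [ha₀def]
        rw [this]
        have := hIoo z z₀ hz
        linarith
    have hFx : F (0, qb, z, z / 2) = 0 := by
      simp [hFdef, exF]
      ring
    have hstep : Φ (0, qb, z, z / 2) = (0, qb, z, 0) := by
      simp [hΦdef, hFx]
    have hlinv : Φh.symm (Φ (0, qb, z, z / 2)) = (0, qb, z, z / 2) := by
      rw [← hcoe]
      exact Φh.left_inv hxsrc
    rw [hstep] at hlinv
    rw [hγdef]
    simp only [hlinv]
  · -- the equation and uniqueness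
    intro h hh qb hqb z hz
    have hk := key h qb z hh hqb hz
    constructor
    · rw [exf_eq g V hgd hVd]
      exact hk.2.2.1
    · intro v hv hfv
      have hxsrc : (h, qb, z, v) ∈ Φh.source := by
        apply hδ₁
        apply Metric.ball_subset_ball hεδ₁
        apply hball
        · simpa [ha₀def] using hIoo0 h hh
        · simpa [ha₀def] using hIoo qb qb₀ hqb
        · simpa [ha₀def] using hIoo z z₀ hz
        · simpa [ha₀def] using hv
      have hssrc : (h, qb, z, γ h qb z) ∈ Φh.source := by
        rw [← hk.2.1]
        exact Φh.map_target hk.1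
      have hFv : F (h, qb, z, v) = 0 := by
        rw [exf_eq g V hgd hVd] at hfv
        exact hfv
      have hΦeq : Φh (h, qb, z, v) = Φh (h, qb, z, γ h qb z) := by
        rw [hcoe]
        simp only [hΦdef, hFv, hk.2.2.1]
      have := Φh.injOn hxsrc hssrc hΦeq
      exact congrArg (fun w => w.2.2.2) this
end
end
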